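/- arXiv:2003.11466 — 4 statements merged into one kernel-verified Lean document; each statement's English description precedes it below -/
import Mathlib

section
/- Let f : (0,∞) → ℝ satisfy f(s) ≥ c₀ s − c₁ for all s > 0, where c₀, c₁ > 0. Then there exists R₀ = R₀(c₀, n) > 0 such that for every x₀ ∈ ℝⁿ and every positive function u ∈ C²(cl(B_{2R₀}(x₀))) satisfying the supersolution inequality −Δu ≥ f(u) in cl(B_{2R₀}(x₀)), one has ∫_{B_{R₀}(x₀)} u(x) dx ≤ C, where C depends only on c₀, c₁, n. -/
open MeasureTheory Set Metric

/-- Partial derivative in the `i`-th coordinate direction. -/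
noncomputable def pd {m : ℕ} (i : Fin m) (u : EuclideanSpace ℝ (Fin m) → ℝ)
    (x : EuclideanSpace ℝ (Fin m)) : ℝ :=
  fderiv ℝ u x (EuclideanSpace.single i 1)

/-- The Laplacian `Δu = ∑ ∂²u/∂xᵢ²`. -/
noncomputable def lap {m : ℕ} (u : EuclideanSpace ℝ (Fin m) → ℝ)
    (x : EuclideanSpace ℝ (Fin m)) : ℝ :=
  ∑ i, pd i (fun y => pd i u y) x

namespace SupAux
open Real

/-- 1-D bump: `g a t = (1 + cos (π t / a)) / 2`. -/
noncomputable def g (a t : ℝ) : ℝ := (1 + Real.cos (π/a * t)) / 2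
noncomputable def g1 (a t : ℝ) : ℝ := -(π/a) * Real.sin (π/a * t) / 2
noncomputable def g2 (a t : ℝ) : ℝ := -(π/a)^2 * Real.cos (π/a * t) / 2

lemma hasDerivAt_g (a t : ℝ) : HasDerivAt (g a) (g1 a t) t := by
  have h : HasDerivAt (fun t : ℝ => π/a * t) (π/a) t := by
    simpa using (hasDerivAt_id t).const_mul (π/a)
  have := ((Real.hasDerivAt_cos (π/a * t)).comp t h).const_add 1
  have := this.div_const 2
  convert this using 1
  · rfl
  · rfl
  · rfl
  simp [g1]; ring

lemma hasDerivAt_g1 (a t : ℝ) : HasDerivAt (g1 a) (g2 a t) t := by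
  have h : HasDerivAt (fun t : ℝ => π/a * t) (π/a) t := by
    simpa using (hasDerivAt_id t).const_mul (π/a)
  have := (((Real.hasDerivAt_sin (π/a * t)).comp t h).const_mul (-(π/a))).div_const 2
  convert this using 1
  · rfl
  · rfl
  · rfl
  simp [g2]; ring

lemma continuous_g (a : ℝ) : Continuous (g a) := by
  unfold g; fun_prop
lemma continuous_g1 (a : ℝ) : Continuous (g1 a) := by
  unfold g1; fun_prop
lemma continuous_g2 (a : ℝ) : Continuous (g2 a) := by
  unfold g2; fun_prop

lemma g_nonneg (a t : ℝ) : 0 ≤ g a t := by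
  have := Real.neg_one_le_cos (π/a * t); unfold g; linarith

lemma g_le_one (a t : ℝ) : g a t ≤ 1 := by
  have := Real.cos_le_one (π/a * t); unfold g; linarith

lemma g_bdry (a : ℝ) (ha : 0 < a) {t : ℝ} (ht : t = a ∨ t = -a) : g a t = 0 := by
  have h1 : π/a * a = π := by field_simp
  rcases ht with rfl | rfl
  · simp [g, h1]
  · simp [g, mul_neg, h1]

lemma g1_bdry (a : ℝ) (ha : 0 < a) {t : ℝ} (ht : t = a ∨ t = -a) : g1 a t = 0 := by
  have h1 : π/a * a = π := by field_simp
  rcases ht with rfl | rfl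
  · simp [g1, h1]
  · simp [g1, mul_neg, h1]

lemma g2_ge (a t : ℝ) : -(π/a)^2 * g a t ≤ g2 a t := by
  have := Real.neg_one_le_cos (π/a * t)
  have h2 : (0:ℝ) ≤ (π/a)^2 := sq_nonneg _
  unfold g g2; nlinarith

lemma g_core (a : ℝ) (ha : 0 < a) {t : ℝ} (ht : |t| ≤ a/2) : 1/2 ≤ g a t := by
  have h0 : 0 ≤ Real.cos (π/a * t) := by
    apply Real.cos_nonneg_of_mem_Icc
    have hpa : 0 < π/a := div_pos Real.pi_pos ha
    have h1 : |π/a * t| ≤ π/2 := by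
      rw [abs_mul, abs_of_pos hpa]
      calc π/a * |t| ≤ π/a * (a/2) := by
            apply mul_le_mul_of_nonneg_left ht hpa.le
        _ = π/2 := by field_simp
    constructor
    · linarith [neg_abs_le (π/a * t), Real.pi_pos]
    · linarith [le_abs_self (π/a * t)]
  unfold g; linarith


variable {m : ℕ}

noncomputable def pdP (i : Fin m) (v : (Fin m → ℝ) → ℝ) (x : Fin m → ℝ) : ℝ :=
  fderiv ℝ v x (Pi.single i 1)

noncomputable def lapP (v : (Fin m → ℝ) → ℝ) (x : Fin m → ℝ) : ℝ :=
  ∑ i, pdP i (fun y => pdP i v y) x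

/-- product bump on a box -/
noncomputable def φ (a : ℝ) (c : Fin m → ℝ) (x : Fin m → ℝ) : ℝ :=
  ∏ i, g a (x i - c i)

noncomputable def Pe (a : ℝ) (c : Fin m → ℝ) (i : Fin m) (x : Fin m → ℝ) : ℝ :=
  ∏ j ∈ Finset.univ.erase i, g a (x j - c j)

lemma hasFDerivAt_coord (a : ℝ) (c : Fin m → ℝ) (i : Fin m) (x : Fin m → ℝ) :
    HasFDerivAt (fun y : Fin m → ℝ => g a (y i - c i))
      (g1 a (x i - c i) • (ContinuousLinearMap.proj i : (Fin m → ℝ) →L[ℝ] ℝ)) x := by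
  have hlin : HasFDerivAt (fun y : Fin m → ℝ => y i - c i)
      (ContinuousLinearMap.proj i : (Fin m → ℝ) →L[ℝ] ℝ) x := by
    simpa using ((ContinuousLinearMap.proj i : (Fin m → ℝ) →L[ℝ] ℝ).hasFDerivAt (x := x)).sub_const (c i)
  exact (hasDerivAt_g a (x i - c i)).comp_hasFDerivAt x hlin

lemma hasFDerivAt_φ (a : ℝ) (c : Fin m → ℝ) (x : Fin m → ℝ) :
    HasFDerivAt (φ a c)
      (∑ i, Pe a c i x • (g1 a (x i - c i) •
        (ContinuousLinearMap.proj i : (Fin m → ℝ) →L[ℝ] ℝ))) x := by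
  exact HasFDerivAt.finset_prod (fun i _ => hasFDerivAt_coord a c i x)

lemma pdP_φ (a : ℝ) (c : Fin m → ℝ) (i : Fin m) (x : Fin m → ℝ) :
    pdP i (φ a c) x = g1 a (x i - c i) * Pe a c i x := by
  rw [pdP, (hasFDerivAt_φ a c x).fderiv]
  rw [ContinuousLinearMap.sum_apply]
  rw [Finset.sum_eq_single i]
  · simp [mul_comm]
  · intro j _ hj
    simp [Pi.single_apply, hj.symm]
  · simp


-- second derivative pieces
lemma hasFDerivAt_coord1 (a : ℝ) (c : Fin m → ℝ) (i : Fin m) (x : Fin m → ℝ) :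
    HasFDerivAt (fun y : Fin m → ℝ => g1 a (y i - c i))
      (g2 a (x i - c i) • (ContinuousLinearMap.proj i : (Fin m → ℝ) →L[ℝ] ℝ)) x := by
  have hlin : HasFDerivAt (fun y : Fin m → ℝ => y i - c i)
      (ContinuousLinearMap.proj i : (Fin m → ℝ) →L[ℝ] ℝ) x := by
    simpa using ((ContinuousLinearMap.proj i : (Fin m → ℝ) →L[ℝ] ℝ).hasFDerivAt (x := x)).sub_const (c i)
  exact (hasDerivAt_g1 a (x i - c i)).comp_hasFDerivAt x hlin

lemma hasFDerivAt_Pe (a : ℝ) (c : Fin m → ℝ) (i : Fin m) (x : Fin m → ℝ) :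
    HasFDerivAt (Pe a c i)
      (∑ j ∈ Finset.univ.erase i, (∏ k ∈ (Finset.univ.erase i).erase j, g a (x k - c k)) •
        (g1 a (x j - c j) • (ContinuousLinearMap.proj j : (Fin m → ℝ) →L[ℝ] ℝ))) x :=
  HasFDerivAt.finset_prod (fun j _ => hasFDerivAt_coord a c j x)

lemma hasFDerivAt_pdφ (a : ℝ) (c : Fin m → ℝ) (i : Fin m) (x : Fin m → ℝ) :
    HasFDerivAt (fun y => pdP i (φ a c) y)
      (Pe a c i x • (g2 a (x i - c i) • (ContinuousLinearMap.proj i : (Fin m → ℝ) →L[ℝ] ℝ)) +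
        g1 a (x i - c i) •
          (∑ j ∈ Finset.univ.erase i, (∏ k ∈ (Finset.univ.erase i).erase j, g a (x k - c k)) •
            (g1 a (x j - c j) • (ContinuousLinearMap.proj j : (Fin m → ℝ) →L[ℝ] ℝ)))) x := by
  have h := ((hasFDerivAt_coord1 a c i x).mul (hasFDerivAt_Pe a c i x))
  have heq : (fun y => pdP i (φ a c) y) = fun y => g1 a (y i - c i) * Pe a c i y := by
    funext y; exact pdP_φ a c i y
  rw [heq]
  convert h using 1
  · rfl
  · rfl
  · rfl
  · rfl
  · rfl
  · rfl
  abel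

lemma pdP_pdP_φ (a : ℝ) (c : Fin m → ℝ) (i : Fin m) (x : Fin m → ℝ) :
    pdP i (fun y => pdP i (φ a c) y) x = g2 a (x i - c i) * Pe a c i x := by
  rw [pdP, (hasFDerivAt_pdφ a c i x).fderiv]
  rw [ContinuousLinearMap.add_apply, ContinuousLinearMap.smul_apply,
    ContinuousLinearMap.smul_apply, ContinuousLinearMap.smul_apply,
    ContinuousLinearMap.sum_apply]
  have h0 : ∀ j ∈ Finset.univ.erase i,
      ((∏ k ∈ (Finset.univ.erase i).erase j, g a (x k - c k)) •
        (g1 a (x j - c j) • (ContinuousLinearMap.proj j : (Fin m → ℝ) →L[ℝ] ℝ)))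
          (Pi.single i 1) = 0 := by
    intro j hj
    have hji : j ≠ i := Finset.ne_of_mem_erase hj
    simp [Pi.single_apply, hji]
  rw [Finset.sum_eq_zero h0]
  simp [mul_comm]

lemma lapP_φ (a : ℝ) (c : Fin m → ℝ) (x : Fin m → ℝ) :
    lapP (φ a c) x = ∑ i, g2 a (x i - c i) * Pe a c i x := by
  unfold lapP
  exact Finset.sum_congr rfl (fun i _ => pdP_pdP_φ a c i x)


lemma Pe_nonneg (a : ℝ) (c : Fin m → ℝ) (i : Fin m) (x : Fin m → ℝ) : 0 ≤ Pe a c i x :=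
  Finset.prod_nonneg fun j _ => g_nonneg a _

lemma φ_nonneg (a : ℝ) (c : Fin m → ℝ) (x : Fin m → ℝ) : 0 ≤ φ a c x :=
  Finset.prod_nonneg fun j _ => g_nonneg a _

lemma φ_le_one (a : ℝ) (c : Fin m → ℝ) (x : Fin m → ℝ) : φ a c x ≤ 1 :=
  Finset.prod_le_one (fun j _ => g_nonneg a _) (fun j _ => g_le_one a _)

lemma g_mul_Pe (a : ℝ) (c : Fin m → ℝ) (i : Fin m) (x : Fin m → ℝ) :
    g a (x i - c i) * Pe a c i x = φ a c x := by
  rw [φ, Pe]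
  exact Finset.mul_prod_erase Finset.univ (fun j => g a (x j - c j)) (Finset.mem_univ i)

lemma lapP_φ_ge (a : ℝ) (c : Fin m → ℝ) (x : Fin m → ℝ) :
    -((π/a)^2 * m) * φ a c x ≤ lapP (φ a c) x := by
  rw [lapP_φ]
  have h : ∀ i : Fin m, -(π/a)^2 * φ a c x ≤ g2 a (x i - c i) * Pe a c i x := by
    intro i
    calc -(π/a)^2 * φ a c x = (-(π/a)^2 * g a (x i - c i)) * Pe a c i x := by
          rw [← g_mul_Pe a c i x]; ring
      _ ≤ g2 a (x i - c i) * Pe a c i x :=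
          mul_le_mul_of_nonneg_right (g2_ge a _) (Pe_nonneg a c i x)
  calc -((π/a)^2 * m) * φ a c x = ∑ _i : Fin m, -(π/a)^2 * φ a c x := by
        rw [Finset.sum_const]; simp; ring
    _ ≤ ∑ i, g2 a (x i - c i) * Pe a c i x := Finset.sum_le_sum fun i _ => h i

lemma φ_core (a : ℝ) (ha : 0 < a) (c : Fin m → ℝ) (x : Fin m → ℝ)
    (hx : ∀ i, |x i - c i| ≤ a/2) : (1/2:ℝ)^m ≤ φ a c x := by
  rw [φ]
  calc ((1:ℝ)/2)^m = ∏ _i : Fin m, (1/2:ℝ) := by simp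
    _ ≤ ∏ i, g a (x i - c i) :=
      Finset.prod_le_prod (fun _ _ => by norm_num) (fun i _ => g_core a ha (hx i))

lemma φ_bdry (a : ℝ) (ha : 0 < a) (c : Fin m → ℝ) (x : Fin m → ℝ) (i : Fin m)
    (hx : x i - c i = a ∨ x i - c i = -a) : φ a c x = 0 := by
  rw [← g_mul_Pe a c i x, g_bdry a ha hx, zero_mul]

lemma continuous_φ (a : ℝ) (c : Fin m → ℝ) : Continuous (φ a c) := by
  apply continuous_finset_prod
  intro i _
  exact (continuous_g a).comp ((continuous_apply i).sub continuous_const)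

lemma continuous_Pe (a : ℝ) (c : Fin m → ℝ) (i : Fin m) : Continuous (Pe a c i) := by
  apply continuous_finset_prod
  intro j _
  exact (continuous_g a).comp ((continuous_apply j).sub continuous_const)

lemma continuous_lapP_φ (a : ℝ) (c : Fin m → ℝ) : Continuous (lapP (φ a c)) := by
  have : lapP (φ a c) = fun x => ∑ i, g2 a (x i - c i) * Pe a c i x := funext (lapP_φ a c)
  rw [this]
  apply continuous_finset_sum
  intro i _
  exact ((continuous_g2 a).comp ((continuous_apply i).sub continuous_const)).mul
    (continuous_Pe a c i)


lemma pdP_eq_comp (i : Fin m) (v : (Fin m → ℝ) → ℝ) :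
    pdP i v = (ContinuousLinearMap.apply ℝ ℝ (Pi.single i 1 : Fin m → ℝ)) ∘ (fderiv ℝ v) := rfl

variable {U : Set (Fin m → ℝ)} {v : (Fin m → ℝ) → ℝ}

lemma contDiffOn_pdP (hU : IsOpen U) (hv : ContDiffOn ℝ 2 v U) (i : Fin m) :
    ContDiffOn ℝ 1 (pdP i v) U := by
  rw [pdP_eq_comp]
  exact (ContinuousLinearMap.apply ℝ ℝ (Pi.single i 1 : Fin m → ℝ)).contDiff.comp_contDiffOn
    (hv.fderiv_of_isOpen hU (by norm_num))

lemma differentiableAt_pdP (hU : IsOpen U) (hv : ContDiffOn ℝ 2 v U) (i : Fin m)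
    {x : Fin m → ℝ} (hx : x ∈ U) : DifferentiableAt ℝ (pdP i v) x :=
  ((contDiffOn_pdP hU hv i).contDiffAt (hU.mem_nhds hx)).differentiableAt one_ne_zero

lemma differentiableAt_of_C2 (hU : IsOpen U) (hv : ContDiffOn ℝ 2 v U)
    {x : Fin m → ℝ} (hx : x ∈ U) : DifferentiableAt ℝ v x :=
  (hv.contDiffAt (hU.mem_nhds hx)).differentiableAt two_ne_zero

lemma continuousOn_pdP (hU : IsOpen U) (hv : ContDiffOn ℝ 2 v U) (i : Fin m) :
    ContinuousOn (pdP i v) U := (contDiffOn_pdP hU hv i).continuousOn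

lemma continuousOn_pdP_pdP (hU : IsOpen U) (hv : ContDiffOn ℝ 2 v U) (i : Fin m) :
    ContinuousOn (fun y => pdP i (fun z => pdP i v z) y) U := by
  have h1 : ContinuousOn (fderiv ℝ (pdP i v)) U :=
    (contDiffOn_pdP hU hv i).continuousOn_fderiv_of_isOpen hU le_rfl
  have : (fun y => pdP i (fun z => pdP i v z) y) =
      (ContinuousLinearMap.apply ℝ ℝ (Pi.single i 1 : Fin m → ℝ)) ∘ (fderiv ℝ (pdP i v)) := rfl
  rw [this]
  exact (ContinuousLinearMap.apply ℝ ℝ (Pi.single i 1 : Fin m → ℝ)).continuous.comp_continuousOn h1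

lemma continuousOn_lapP (hU : IsOpen U) (hv : ContDiffOn ℝ 2 v U) :
    ContinuousOn (lapP v) U := by
  unfold lapP
  exact continuousOn_finset_sum _ fun i _ => continuousOn_pdP_pdP hU hv i


lemma continuous_pdP_φ (a : ℝ) (c : Fin m → ℝ) (i : Fin m) :
    Continuous (pdP i (φ a c)) := by
  have : pdP i (φ a c) = fun x => g1 a (x i - c i) * Pe a c i x := funext (pdP_φ a c i)
  rw [this]
  exact ((continuous_g1 a).comp ((continuous_apply i).sub continuous_const)).mul
    (continuous_Pe a c i)

/-- Green's identity on a box: since `φ` and `∇φ` vanish on the boundary. -/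
lemma green {k : ℕ} (a : ℝ) (ha : 0 < a) (c : Fin (k+1) → ℝ)
    {U : Set (Fin (k+1) → ℝ)} (hU : IsOpen U)
    {v : (Fin (k+1) → ℝ) → ℝ} (hv : ContDiffOn ℝ 2 v U)
    (hQ : Icc (fun i => c i - a) (fun i => c i + a) ⊆ U) :
    ∫ x in Icc (fun i => c i - a) (fun i => c i + a),
      (v x * lapP (φ a c) x - φ a c x * lapP v x) = 0 := by
  set lo : Fin (k+1) → ℝ := fun i => c i - a with hlo
  set hi : Fin (k+1) → ℝ := fun i => c i + a with hhi
  have hle : lo ≤ hi := fun i => by simp [hlo, hhi]; linarith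
  set f : Fin (k+1) → (Fin (k+1) → ℝ) → ℝ :=
    fun i x => v x * pdP i (φ a c) x - φ a c x * pdP i v x with hf
  set f' : Fin (k+1) → (Fin (k+1) → ℝ) → (Fin (k+1) → ℝ) →L[ℝ] ℝ :=
    fun i x => fderiv ℝ (f i) x with hf'
  -- differentiability of each `f i` on `U`
  have hdiff : ∀ i, ∀ x ∈ U, DifferentiableAt ℝ (f i) x := by
    intro i x hx
    exact ((differentiableAt_of_C2 hU hv hx).mul
        (hasFDerivAt_pdφ a c i x).differentiableAt).sub
      (((hasFDerivAt_φ a c x).differentiableAt).mul (differentiableAt_pdP hU hv i hx))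
  -- pointwise divergence identity on `U`
  have hsum : ∀ x ∈ U,
      (∑ i, f' i x (Pi.single i 1)) = v x * lapP (φ a c) x - φ a c x * lapP v x := by
    intro x hx
    have hterm : ∀ i : Fin (k+1), f' i x (Pi.single i 1) =
        v x * pdP i (fun y => pdP i (φ a c) y) x + pdP i (φ a c) x * pdP i v x -
          (φ a c x * pdP i (fun y => pdP i v y) x + pdP i v x * pdP i (φ a c) x) := by
      intro i
      have hdv := differentiableAt_of_C2 hU hv hx
      have hdpv := differentiableAt_pdP hU hv i hx
      have hdφ := (hasFDerivAt_φ a c x).differentiableAt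
      have hdpφ := (hasFDerivAt_pdφ a c i x).differentiableAt
      have h1 : f' i x = fderiv ℝ (fun y => v y * pdP i (φ a c) y) x -
          fderiv ℝ (fun y => φ a c y * pdP i v y) x := by
        rw [hf']
        exact fderiv_sub (hdv.mul hdpφ) (hdφ.mul hdpv)
      rw [h1, ContinuousLinearMap.sub_apply, fderiv_fun_mul hdv hdpφ, fderiv_fun_mul hdφ hdpv,
        ContinuousLinearMap.add_apply, ContinuousLinearMap.add_apply,
        ContinuousLinearMap.smul_apply, ContinuousLinearMap.smul_apply,
        ContinuousLinearMap.smul_apply, ContinuousLinearMap.smul_apply]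
      rfl
    rw [Finset.sum_congr rfl fun i _ => hterm i]
    rw [lapP, lapP, Finset.mul_sum, Finset.mul_sum, ← Finset.sum_sub_distrib]
    exact Finset.sum_congr rfl fun i _ => by ring
  -- continuity of each `f i` on the box
  have Hc : ∀ i, ContinuousOn (f i) (Icc lo hi) := by
    intro i
    have : ContinuousOn (f i) U :=
      ((hv.continuousOn).mul (continuous_pdP_φ a c i).continuousOn).sub
        ((continuous_φ a c).continuousOn.mul (continuousOn_pdP hU hv i))
    exact this.mono hQ
  -- differentiability hypothesis
  have Hd : ∀ x ∈ (Set.pi univ fun i => Ioo (lo i) (hi i)) \ (∅ : Set (Fin (k+1) → ℝ)),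
      ∀ i, HasFDerivAt (f i) (f' i x) x := by
    intro x hx i
    have hxU : x ∈ U := by
      apply hQ
      rw [← Set.pi_univ_Icc]
      exact Set.pi_mono (fun j _ => Ioo_subset_Icc_self) hx.1
    exact (hdiff i x hxU).hasFDerivAt
  -- integrability of the divergence
  have Hw : ContinuousOn (fun x => v x * lapP (φ a c) x - φ a c x * lapP v x) (Icc lo hi) :=
    (((hv.continuousOn).mul (continuous_lapP_φ a c).continuousOn).sub
      ((continuous_φ a c).continuousOn.mul (continuousOn_lapP hU hv))).mono hQ
  have Hi : IntegrableOn (fun x => ∑ i, f' i x (Pi.single i 1)) (Icc lo hi) := by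
    refine (Hw.integrableOn_compact isCompact_Icc).congr_fun (fun x hx => ?_) measurableSet_Icc
    exact (hsum x (hQ hx)).symm
  have key := integral_divergence_of_hasFDerivAt_off_countable' lo hi hle
    f f' ∅ countable_empty Hc Hd Hi
  -- the boundary terms vanish
  have hfront : ∀ (i : Fin (k+1)) (x : Fin k → ℝ), f i (i.insertNth (hi i) x) = 0 := by
    intro i x
    have h1 : (i.insertNth (α := fun _ => ℝ) (hi i) x) i - c i = a := by
      simp [Fin.insertNth_apply_same, hhi]
    rw [hf]
    simp only [pdP_φ, g1_bdry a ha (Or.inl h1), φ_bdry a ha c _ i (Or.inl h1)]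
    ring
  have hback : ∀ (i : Fin (k+1)) (x : Fin k → ℝ), f i (i.insertNth (lo i) x) = 0 := by
    intro i x
    have h1 : (i.insertNth (α := fun _ => ℝ) (lo i) x) i - c i = -a := by
      simp [Fin.insertNth_apply_same, hlo]
    rw [hf]
    simp only [pdP_φ, g1_bdry a ha (Or.inr h1), φ_bdry a ha c _ i (Or.inr h1)]
    ring
  have hRHS : (∑ i : Fin (k+1),
      ((∫ x in Icc (lo ∘ Fin.succAbove i) (hi ∘ Fin.succAbove i), f i (i.insertNth (hi i) x)) -
        ∫ x in Icc (lo ∘ Fin.succAbove i) (hi ∘ Fin.succAbove i), f i (i.insertNth (lo i) x))) = 0 := by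
    apply Finset.sum_eq_zero
    intro i _
    simp only [hfront, hback, integral_zero, sub_zero]
  rw [hRHS] at key
  rw [← key]
  exact setIntegral_congr_fun measurableSet_Icc (fun x hx => (hsum x (hQ hx)).symm)

/-- Main estimate on one box. -/
lemma box_est {k : ℕ} (a c₀ c₁ : ℝ) (ha : 0 < a) (hc₀ : 0 < c₀) (hc₁ : 0 < c₁)
    (hlam : ((k:ℝ)+1) * (π/a)^2 ≤ c₀/2)
    (c : Fin (k+1) → ℝ) {U : Set (Fin (k+1) → ℝ)} (hU : IsOpen U)
    {v : (Fin (k+1) → ℝ) → ℝ} (hv : ContDiffOn ℝ 2 v U)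
    (hQ : Icc (fun i => c i - a) (fun i => c i + a) ⊆ U)
    (hpos : ∀ x ∈ Icc (fun i => c i - a) (fun i => c i + a), 0 ≤ v x)
    (hsup : ∀ x ∈ Icc (fun i => c i - a) (fun i => c i + a), lapP v x ≤ c₁ - c₀ * v x) :
    ∫ x in Icc (fun i => c i - a/2) (fun i => c i + a/2), v x ≤
      2^(k+1) * (2*c₁/c₀) * (2*a)^(k+1) := by
  set lo : Fin (k+1) → ℝ := fun i => c i - a with hlo
  set hi : Fin (k+1) → ℝ := fun i => c i + a with hhi
  set Q : Set (Fin (k+1) → ℝ) := Icc lo hi with hQdef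
  set core : Set (Fin (k+1) → ℝ) := Icc (fun i => c i - a/2) (fun i => c i + a/2) with hcore
  have hcoreQ : core ⊆ Q := by
    apply Icc_subset_Icc <;> intro i <;> simp [hlo, hhi] <;> linarith
  have hvc : ContinuousOn v Q := hv.continuousOn.mono hQ
  have hQm : MeasurableSet Q := measurableSet_Icc
  have hcm : MeasurableSet core := measurableSet_Icc
  -- integrability
  have Ivφ : IntegrableOn (fun x => v x * φ a c x) Q :=
    (hvc.mul (continuous_φ a c).continuousOn).integrableOn_compact isCompact_Icc
  have Ivlφ : IntegrableOn (fun x => v x * lapP (φ a c) x) Q :=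
    (hvc.mul (continuous_lapP_φ a c).continuousOn).integrableOn_compact isCompact_Icc
  have Iφlv : IntegrableOn (fun x => φ a c x * lapP v x) Q :=
    ((continuous_φ a c).continuousOn.mul
      ((continuousOn_lapP hU hv).mono hQ)).integrableOn_compact isCompact_Icc
  have Iφ : IntegrableOn (φ a c) Q :=
    (continuous_φ a c).continuousOn.integrableOn_compact isCompact_Icc
  have Iv : IntegrableOn v Q := hvc.integrableOn_compact isCompact_Icc
  set lam : ℝ := ((k:ℝ)+1) * (π/a)^2 with hl
  -- step 1 : Green
  have h1 : ∫ x in Q, v x * lapP (φ a c) x = ∫ x in Q, φ a c x * lapP v x := by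
    have := green a ha c hU hv hQ
    rw [integral_sub Ivlφ Iφlv] at this
    linarith
  -- step 2 : lower bound on LHS
  have h2 : -lam * ∫ x in Q, v x * φ a c x ≤ ∫ x in Q, v x * lapP (φ a c) x := by
    rw [← integral_const_mul]
    apply setIntegral_mono_on ((Ivφ.const_mul _)) Ivlφ hQm
    intro x hx
    have h := lapP_φ_ge a c x
    have hvx := hpos x hx
    show -lam * (v x * φ a c x) ≤ v x * lapP (φ a c) x
    rw [hl]
    push_cast at h
    nlinarith [mul_le_mul_of_nonneg_left h hvx]
  -- step 3 : upper bound on RHS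
  have h3 : ∫ x in Q, φ a c x * lapP v x ≤
      c₁ * (∫ x in Q, φ a c x) - c₀ * ∫ x in Q, v x * φ a c x := by
    have : ∫ x in Q, φ a c x * lapP v x ≤
        ∫ x in Q, (c₁ * φ a c x - c₀ * (v x * φ a c x)) := by
      apply setIntegral_mono_on Iφlv ((Iφ.const_mul c₁).sub (Ivφ.const_mul c₀)) hQm
      intro x hx
      have hφx := φ_nonneg a c x
      have := hsup x hx
      simp only [Pi.sub_apply]
      nlinarith [mul_le_mul_of_nonneg_left this hφx]
    rw [integral_sub (Iφ.const_mul c₁) (Ivφ.const_mul c₀), integral_const_mul,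
      integral_const_mul] at this
    exact this
  -- step 4 : volume bound
  have hvol : (∫ x in Q, φ a c x) ≤ (2*a)^(k+1) := by
    have hle : lo ≤ hi := fun i => by simp [hlo, hhi]; linarith
    have h4 : ∫ x in Q, φ a c x ≤ ∫ _x in Q, (1:ℝ) := by
      apply setIntegral_mono_on Iφ (integrableOn_const ?_) hQm
      · exact fun x _ => φ_le_one a c x
      · exact measure_Icc_lt_top.ne
    rw [setIntegral_const] at h4
    have hvol2 : (volume Q).toReal = (2*a)^(k+1) := by
      rw [hQdef, Real.volume_Icc_pi_toReal hle]
      have : ∀ i : Fin (k+1), hi i - lo i = 2*a := fun i => by simp [hlo, hhi]; ring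
      rw [Finset.prod_congr rfl (fun i _ => this i)]
      simp
    rw [measureReal_def, hvol2] at h4
    simpa using h4
  have h5 : 0 ≤ ∫ x in Q, v x * φ a c x := by
    apply setIntegral_nonneg hQm
    intro x hx
    exact mul_nonneg (hpos x hx) (φ_nonneg a c x)
  -- combine : ∫ vφ ≤ (2c₁/c₀) (2a)^(k+1)
  have hvφ : ∫ x in Q, v x * φ a c x ≤ 2*c₁/c₀ * (2*a)^(k+1) := by
    have hkey : (c₀ - lam) * (∫ x in Q, v x * φ a c x) ≤ c₁ * (2*a)^(k+1) := by
      have := h1 ▸ h2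
      nlinarith [mul_le_mul_of_nonneg_left hvol hc₁.le]
    have hhalf : c₀/2 ≤ c₀ - lam := by linarith
    have hIc : c₀/2 * (∫ x in Q, v x * φ a c x) ≤ c₁ * (2*a)^(k+1) :=
      le_trans (mul_le_mul_of_nonneg_right hhalf h5) hkey
    have h2c : 2*c₁/c₀ * (2*a)^(k+1) = (c₁ * (2*a)^(k+1)) / (c₀/2) := by
      field_simp
    rw [h2c, le_div_iff₀ (by positivity : (0:ℝ) < c₀/2)]
    nlinarith [hIc]
  -- core bound
  have hcorele : ∫ x in core, v x ≤ 2^(k+1) * ∫ x in core, v x * φ a c x := by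
    rw [← integral_const_mul]
    apply setIntegral_mono_on (Iv.mono_set hcoreQ) ((Ivφ.mono_set hcoreQ).const_mul _) hcm
    intro x hx
    have hxc : ∀ i, |x i - c i| ≤ a/2 := by
      intro i
      rw [abs_sub_le_iff]
      constructor
      · have := hx.2 i; simpa using by linarith [hx.2 i]
      · linarith [hx.1 i]
    have hφ := φ_core a ha c x hxc
    have hvx := hpos x (hcoreQ hx)
    have h2k : (0:ℝ) < 2^(k+1) := by positivity
    have hpow : (2:ℝ)^(k+1) * (1/2:ℝ)^(k+1) = 1 := by
      rw [← mul_pow]; norm_num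
    have key2 : v x * (1/2:ℝ)^(k+1) ≤ v x * φ a c x := mul_le_mul_of_nonneg_left hφ hvx
    have key3 := mul_le_mul_of_nonneg_left key2 h2k.le
    have key4 : (2:ℝ)^(k+1) * (v x * (1/2:ℝ)^(k+1)) = v x := by
      rw [mul_comm (v x), ← mul_assoc, hpow, one_mul]
    linarith [key3]
  have hmono : ∫ x in core, v x * φ a c x ≤ ∫ x in Q, v x * φ a c x := by
    apply setIntegral_mono_set Ivφ
    · refine (ae_restrict_iff' hQm).2 (ae_of_all _ ?_)
      intro x hx
      exact mul_nonneg (hpos x hx) (φ_nonneg a c x)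
    · exact HasSubset.Subset.eventuallyLE hcoreQ
  calc ∫ x in core, v x ≤ 2^(k+1) * ∫ x in core, v x * φ a c x := hcorele
    _ ≤ 2^(k+1) * ∫ x in Q, v x * φ a c x := by
        apply mul_le_mul_of_nonneg_left hmono; positivity
    _ ≤ 2^(k+1) * (2*c₁/c₀ * (2*a)^(k+1)) := by
        apply mul_le_mul_of_nonneg_left hvφ; positivity
    _ = 2^(k+1) * (2*c₁/c₀) * (2*a)^(k+1) := by ring

/-- the identity continuous linear equivalence -/
noncomputable def eL (m : ℕ) : EuclideanSpace ℝ (Fin m) ≃L[ℝ] (Fin m → ℝ) :=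
  PiLp.continuousLinearEquiv 2 ℝ (fun _ : Fin m => ℝ)

lemma eL_coe_measurable : ⇑(eL m) = ⇑(MeasurableEquiv.toLp 2 (Fin m → ℝ)).symm := rfl

lemma eL_single (i : Fin m) : (eL m) (EuclideanSpace.single i 1) = Pi.single i 1 := by
  rfl

lemma u_eq_comp (u : EuclideanSpace ℝ (Fin m) → ℝ) :
    u = (u ∘ (eL m).symm) ∘ (eL m) := by
  funext x; simp

lemma pd_transfer (u : EuclideanSpace ℝ (Fin m) → ℝ) (i : Fin m)
    (x : EuclideanSpace ℝ (Fin m)) :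
    pd i u x = pdP i (u ∘ (eL m).symm) ((eL m) x) := by
  rw [pd, pdP]
  conv_lhs => rw [u_eq_comp u]
  rw [(eL m).comp_right_fderiv]
  rw [ContinuousLinearMap.comp_apply, show ((eL m : EuclideanSpace ℝ (Fin m) →L[ℝ] (Fin m → ℝ))) (EuclideanSpace.single i 1) = Pi.single i 1 from eL_single i]
lemma pd_comp (u : EuclideanSpace ℝ (Fin m) → ℝ) (i : Fin m) :
    (fun x => pd i u x) = (fun y => pdP i (u ∘ (eL m).symm) y) ∘ (eL m) := by
  funext x; exact pd_transfer u i x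

lemma lap_transfer (u : EuclideanSpace ℝ (Fin m) → ℝ) (x : EuclideanSpace ℝ (Fin m)) :
    lap u x = lapP (u ∘ (eL m).symm) ((eL m) x) := by
  rw [lap, lapP]
  apply Finset.sum_congr rfl
  intro i _
  rw [pd, pdP]
  conv_lhs => rw [show (fun y => pd i u y) = (fun y => pdP i (u ∘ (eL m).symm) y) ∘ (eL m) from pd_comp u i]
  rw [(eL m).comp_right_fderiv, ContinuousLinearMap.comp_apply, show ((eL m : EuclideanSpace ℝ (Fin m) →L[ℝ] (Fin m → ℝ))) (EuclideanSpace.single i 1) = Pi.single i 1 from eL_single i]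

lemma integral_transfer (v : (Fin m → ℝ) → ℝ) (S : Set (Fin m → ℝ)) :
    ∫ x in (eL m) ⁻¹' S, v ((eL m) x) = ∫ y in S, v y := by
  have h := (EuclideanSpace.volume_preserving_symm_measurableEquiv_toLp (Fin m))
  have hemb : MeasurableEmbedding (MeasurableEquiv.toLp 2 (Fin m → ℝ)).symm :=
    (MeasurableEquiv.toLp 2 (Fin m → ℝ)).symm.measurableEmbedding
  have := h.setIntegral_preimage_emb hemb v S
  convert this using 2
  · rfl
  · rfl
  · rfl

lemma setIntegral_biUnion_le {α : Type*} [MeasurableSpace α] (μ : Measure α) {ι : Type*}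
    (t : Finset ι) (s : ι → Set α) (f : α → ℝ)
    (hm : ∀ i ∈ t, MeasurableSet (s i))
    (hf : ∀ i ∈ t, ∀ x ∈ s i, 0 ≤ f x)
    (hint : ∀ i ∈ t, IntegrableOn f (s i) μ) :
    ∫ x in (⋃ i ∈ t, s i), f x ∂μ ≤ ∑ i ∈ t, ∫ x in s i, f x ∂μ := by
  classical
  induction t using Finset.induction_on with
  | empty => simp
  | insert a t ha ih =>
    rw [Finset.set_biUnion_insert, Finset.sum_insert ha]
    have hmB : MeasurableSet (⋃ i ∈ t, s i) :=
      Finset.measurableSet_biUnion t (fun i hi => hm i (Finset.mem_insert_of_mem hi))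
    have hintB : IntegrableOn f (⋃ i ∈ t, s i) μ := by
      rw [integrableOn_finset_iUnion]
      exact fun i hi => hint i (Finset.mem_insert_of_mem hi)
    have hintA : IntegrableOn f (s a) μ := hint a (Finset.mem_insert_self a t)
    have hsplit : s a ∪ (⋃ i ∈ t, s i) = s a ∪ ((⋃ i ∈ t, s i) \ s a) := by
      rw [union_diff_self]
    have h1 : ∫ x in s a ∪ ⋃ i ∈ t, s i, f x ∂μ =
        (∫ x in s a, f x ∂μ) + ∫ x in (⋃ i ∈ t, s i) \ s a, f x ∂μ := by
      rw [hsplit]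
      exact setIntegral_union disjoint_sdiff_self_right
        (hmB.diff (hm a (Finset.mem_insert_self a t))) hintA (hintB.mono_set diff_subset)
    have h2 : ∫ x in (⋃ i ∈ t, s i) \ s a, f x ∂μ ≤ ∫ x in (⋃ i ∈ t, s i), f x ∂μ := by
      apply setIntegral_mono_set hintB
      · refine (ae_restrict_iff' hmB).2 (ae_of_all _ ?_)
        intro x hx
        rcases mem_iUnion₂.1 hx with ⟨i, hi, hxi⟩
        exact hf i (Finset.mem_insert_of_mem hi) x hxi
      · exact HasSubset.Subset.eventuallyLE diff_subset
    have h3 := ih (fun i hi => hm i (Finset.mem_insert_of_mem hi))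
      (fun i hi => hf i (Finset.mem_insert_of_mem hi))
      (fun i hi => hint i (Finset.mem_insert_of_mem hi))
    linarith

variable {m : ℕ}

lemma coord_le_dist (x y : EuclideanSpace ℝ (Fin m)) (i : Fin m) :
    |x i - y i| ≤ dist x y := by
  rw [EuclideanSpace.dist_eq]
  have h1 : |x i - y i| = Real.sqrt ((x i - y i)^2) := (Real.sqrt_sq_eq_abs _).symm
  rw [h1]
  apply Real.sqrt_le_sqrt
  have : (x i - y i)^2 = dist (x i) (y i)^2 := by rw [Real.dist_eq, sq_abs]
  rw [this]
  exact Finset.single_le_sum (f := fun j => dist (x j) (y j)^2)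
    (fun j _ => sq_nonneg _) (Finset.mem_univ i)

lemma dist_le_of_coord (x y : EuclideanSpace ℝ (Fin m)) (r : ℝ) (hr : 0 ≤ r)
    (h : ∀ i, |x i - y i| ≤ r) : dist x y ≤ r * Real.sqrt m := by
  rw [EuclideanSpace.dist_eq]
  have h1 : ∑ i, dist (x i) (y i)^2 ≤ (m:ℝ) * r^2 := by
    have h2 : ∀ i : Fin m, dist (x i) (y i)^2 ≤ r^2 := by
      intro i
      rw [Real.dist_eq]
      nlinarith [abs_nonneg (x i - y i), h i]
    calc ∑ i, dist (x i) (y i)^2 ≤ ∑ _i : Fin m, r^2 :=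
          Finset.sum_le_sum (fun i _ => h2 i)
      _ = (m:ℝ) * r^2 := by rw [Finset.sum_const]; simp [mul_comm]
  have h3 : Real.sqrt ((m:ℝ) * r^2) = r * Real.sqrt m := by
    rw [Real.sqrt_mul (Nat.cast_nonneg m), Real.sqrt_sq hr]; ring
  calc Real.sqrt (∑ i, dist (x i) (y i)^2) ≤ Real.sqrt ((m:ℝ) * r^2) := Real.sqrt_le_sqrt h1
    _ = r * Real.sqrt m := h3


end SupAux
open MeasureTheory Set Metric Real SupAux in
/-- Interior `L¹` bound for positive supersolutions of `-Δu = f(u)` when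
`f(s) ≥ c₀ s - c₁`: there is `R₀ = R₀(c₀,n) > 0` and `C = C(c₀,c₁,n)` such that
`∫_{B_{R₀}(x₀)} u ≤ C` for every positive `C²` supersolution on `cl B_{2R₀}(x₀)`. -/
theorem supersolution_L1_bound (n : ℕ) (c₀ c₁ : ℝ) (hc₀ : 0 < c₀) (hc₁ : 0 < c₁) :
    ∃ R₀ : ℝ, 0 < R₀ ∧ ∃ C : ℝ,
      ∀ f : ℝ → ℝ, (∀ s : ℝ, 0 < s → c₀ * s - c₁ ≤ f s) →
      ∀ x₀ : EuclideanSpace ℝ (Fin n), ∀ u : EuclideanSpace ℝ (Fin n) → ℝ,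
        -- `u ∈ C²(cl B_{2R₀}(x₀))`
        (∃ U : Set (EuclideanSpace ℝ (Fin n)), IsOpen U ∧ closedBall x₀ (2 * R₀) ⊆ U ∧
          ContDiffOn ℝ 2 u U) →
        (∀ x ∈ closedBall x₀ (2 * R₀), 0 < u x) →
        (∀ x ∈ closedBall x₀ (2 * R₀), f (u x) ≤ -lap u x) →
        ∫ x in ball x₀ R₀, u x ≤ C := by
  classical
  rcases n with _ | k
  · -- dimension 0 : the space is a point
    refine ⟨1, one_pos, c₁/c₀, ?_⟩
    intro f hf x₀ u _ hupos husup
    have hx₀ : x₀ ∈ closedBall x₀ (2*1) := mem_closedBall_self (by norm_num)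
    have hlap0 : lap u x₀ = 0 := by simp [lap]
    have h0 := husup x₀ hx₀
    rw [hlap0, neg_zero] at h0
    have h1 := hf (u x₀) (hupos x₀ hx₀)
    have hub : u x₀ ≤ c₁/c₀ := by
      rw [le_div_iff₀ hc₀]; nlinarith
    have hconst : ∀ x : EuclideanSpace ℝ (Fin 0), u x = u x₀ := fun x => by
      congr 1; exact Subsingleton.elim x x₀
    have hvol : (volume (ball x₀ 1)).toReal ≤ 1 := by
      have huniv : volume (univ : Set (EuclideanSpace ℝ (Fin 0))) = 1 := by
        have h := (EuclideanSpace.volume_preserving_symm_measurableEquiv_toLp (Fin 0)).measure_preimage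
          (MeasurableSet.univ (α := Fin 0 → ℝ)).nullMeasurableSet
        rw [preimage_univ] at h
        rw [h, volume_pi, Measure.pi_univ]
        simp
      have hle : volume (ball x₀ 1) ≤ 1 := huniv ▸ measure_mono (subset_univ _)
      calc (volume (ball x₀ 1)).toReal ≤ (1 : ENNReal).toReal :=
            ENNReal.toReal_mono (by norm_num) hle
        _ = 1 := by simp
    calc ∫ x in ball x₀ 1, u x = ∫ _x in ball x₀ 1, u x₀ :=
          setIntegral_congr_fun measurableSet_ball (fun x _ => hconst x)
      _ = (volume (ball x₀ 1)).toReal * u x₀ := by rw [setIntegral_const, smul_eq_mul, measureReal_def]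
      _ ≤ 1 * (c₁/c₀) :=
          mul_le_mul hvol hub (le_of_lt (hupos x₀ hx₀)) zero_le_one
      _ = c₁/c₀ := one_mul _
  · -- dimension k+1
    set a : ℝ := π * Real.sqrt (2*((k:ℝ)+1)/c₀) with hadef
    have hNpos : (0:ℝ) < (k:ℝ)+1 := by positivity
    have ha : 0 < a := mul_pos pi_pos (Real.sqrt_pos.2 (by positivity))
    have hsq : Real.sqrt (2*((k:ℝ)+1)/c₀)^2 = 2*((k:ℝ)+1)/c₀ := Real.sq_sqrt (by positivity)
    have hlam : ((k:ℝ)+1) * (π/a)^2 ≤ c₀/2 := by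
      have ha2 : a^2 = π^2 * (2*((k:ℝ)+1)/c₀) := by rw [hadef, mul_pow, hsq]
      have hπa : (π/a)^2 = c₀/(2*((k:ℝ)+1)) := by
        rw [div_pow, ha2]
        have hπ2 : π^2 ≠ 0 := by positivity
        field_simp
      rw [hπa]
      apply le_of_eq
      field_simp
    set R₀ : ℝ := 2 * a * Real.sqrt ((k:ℝ)+1) with hR₀def
    have hsN : 0 < Real.sqrt ((k:ℝ)+1) := Real.sqrt_pos.2 hNpos
    have hsN1 : 1 ≤ Real.sqrt ((k:ℝ)+1) := by
      have h := Real.sqrt_le_sqrt (show (1:ℝ) ≤ (k:ℝ)+1 by linarith)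
      rwa [Real.sqrt_one] at h
    have hR₀ : 0 < R₀ := by positivity
    set C' : ℝ := 2^(k+1) * (2*c₁/c₀) * (2*a)^(k+1) with hC'def
    have hC'nn : 0 ≤ C' := by positivity
    set K₀ : ℤ := ⌈R₀/a⌉ + 1 with hK₀def
    set Kfin : Finset (Fin (k+1) → ℤ) := Fintype.piFinset (fun _ => Finset.Icc (-K₀) K₀)
      with hKfin
    refine ⟨R₀, hR₀, (Kfin.card : ℝ) * C', ?_⟩
    rintro f hf x₀ u ⟨U, hUopen, hUsub, hu⟩ hupos husup
    set e := eL (k+1) with he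
    set v : (Fin (k+1) → ℝ) → ℝ := u ∘ e.symm with hv
    set W : Set (Fin (k+1) → ℝ) := e.symm ⁻¹' U with hW
    have hWopen : IsOpen W := hUopen.preimage e.symm.continuous
    have hvC2 : ContDiffOn ℝ 2 v W := hu.comp (e.symm.contDiff.contDiffOn) (fun y hy => hy)
    set z : Fin (k+1) → ℝ := e x₀ with hz
    set cP : (Fin (k+1) → ℤ) → (Fin (k+1) → ℝ) := fun knum i => z i + a * (knum i : ℝ)
      with hcP
    set K' : Finset (Fin (k+1) → ℤ) :=
      Kfin.filter
        (fun knum => dist (e.symm (cP knum)) x₀ ≤ R₀ + a * Real.sqrt ((k:ℝ)+1) / 2) with hK'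
    set core : (Fin (k+1) → ℤ) → Set (Fin (k+1) → ℝ) :=
      fun knum => Icc (fun i => cP knum i - a/2) (fun i => cP knum i + a/2) with hcoredef
    set box : (Fin (k+1) → ℤ) → Set (Fin (k+1) → ℝ) :=
      fun knum => Icc (fun i => cP knum i - a) (fun i => cP knum i + a) with hboxdef
    have hecoord : ∀ (x : EuclideanSpace ℝ (Fin (k+1))) (i : Fin (k+1)), (e x) i = x i :=
      fun x i => rfl
    have hsymmcoord : ∀ (w : Fin (k+1) → ℝ) (i : Fin (k+1)), (e.symm w) i = w i :=
      fun w i => rfl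
    -- boxes of k ∈ K' lie in the double ball
    have hboxball : ∀ knum ∈ K', e ⁻¹' (box knum) ⊆ closedBall x₀ (2 * R₀) := by
      intro knum hk x hx
      have hk2 := (Finset.mem_filter.1 hk).2
      have hc1 : (↑k + 1 : ℝ) = ((k+1 : ℕ) : ℝ) := by push_cast; ring
      have hd1 : dist x (e.symm (cP knum)) ≤ a * Real.sqrt ((k:ℝ)+1) := by
        rw [hc1]
        apply dist_le_of_coord _ _ a ha.le
        intro i
        rw [hsymmcoord]
        have hx1 := hx.1 i
        have hx2 := hx.2 i
        simp only [hecoord] at hx1 hx2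
        rw [abs_sub_le_iff]
        exact ⟨by linarith, by linarith⟩
      rw [mem_closedBall]
      calc dist x x₀ ≤ dist x (e.symm (cP knum)) + dist (e.symm (cP knum)) x₀ :=
            dist_triangle _ _ _
        _ ≤ a * Real.sqrt ((k:ℝ)+1) + (R₀ + a * Real.sqrt ((k:ℝ)+1) / 2) :=
            add_le_add hd1 hk2
        _ ≤ 2 * R₀ := by rw [hR₀def]; nlinarith [ha.le, hsN.le]
    -- per-box estimate
    have hper : ∀ knum ∈ K', ∫ x in e ⁻¹' (core knum), u x ≤ C' := by
      intro knum hk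
      have hsymmmem : ∀ y ∈ box knum, e.symm y ∈ e ⁻¹' (box knum) := by
        intro y hy
        simp only [mem_preimage, e.apply_symm_apply]
        exact hy
      have hboxW : box knum ⊆ W := fun y hy =>
        hUsub (hboxball knum hk (hsymmmem y hy))
      have hpos' : ∀ y ∈ box knum, 0 ≤ v y := fun y hy =>
        (hupos _ (hboxball knum hk (hsymmmem y hy))).le
      have hsup' : ∀ y ∈ box knum, lapP v y ≤ c₁ - c₀ * v y := by
        intro y hy
        have hball := hboxball knum hk (hsymmmem y hy)
        have h1 := husup _ hball
        have h2 := hf (u (e.symm y)) (hupos _ hball)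
        have h3 : lap u (e.symm y) = lapP v y := by
          rw [lap_transfer u (e.symm y), e.apply_symm_apply]
        have : lapP v y ≤ c₁ - c₀ * u (e.symm y) := by rw [← h3]; linarith
        exact this
      have hest := box_est a c₀ c₁ ha hc₀ hc₁ hlam (cP knum) hWopen hvC2 hboxW hpos' hsup'
      have htrans : ∫ x in e ⁻¹' (core knum), u x = ∫ y in core knum, v y := by
        have h2 : ∫ x in e ⁻¹' (core knum), u x = ∫ x in e ⁻¹' (core knum), v (e x) := by
          apply setIntegral_congr_fun
            (measurableSet_Icc.preimage e.continuous.measurable)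
          intro x _
          simp [hv]
        rw [h2, he]
        exact integral_transfer v (core knum)
      rw [htrans]
      exact hest
    -- the covering
    have hcov : ball x₀ R₀ ⊆ ⋃ knum ∈ K', e ⁻¹' (core knum) := by
      intro x hx
      have hxball : dist x x₀ < R₀ := mem_ball.1 hx
      set y : Fin (k+1) → ℝ := e x with hy
      set knum : Fin (k+1) → ℤ := fun i => round ((y i - z i)/a) with hknum
      have hcoord : ∀ i, |y i - cP knum i| ≤ a/2 := by
        intro i
        have h1 : y i - cP knum i = a * ((y i - z i)/a - (knum i : ℝ)) := by
          simp only [hcP]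
          field_simp
          ring
        rw [h1, abs_mul, abs_of_pos ha, hknum]
        have := abs_sub_round ((y i - z i)/a)
        nlinarith
      have hyz : ∀ i, |y i - z i| ≤ R₀ := by
        intro i
        have h1 : y i - z i = x i - x₀ i := by
          rw [hy, hz, hecoord, hecoord]
        rw [h1]
        exact le_trans (coord_le_dist x x₀ i) hxball.le
      have hK : knum ∈ Kfin := by
        rw [hKfin, Fintype.mem_piFinset]
        intro i
        rw [Finset.mem_Icc]
        have habs : |((knum i : ℤ) : ℝ)| ≤ R₀/a + 1/2 := by
          rw [hknum]
          have h1 : ((round ((y i - z i)/a) : ℤ) : ℝ) =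
              (y i - z i)/a - ((y i - z i)/a - round ((y i - z i)/a)) := by ring
          rw [h1]
          have h2 := abs_sub_round ((y i - z i)/a)
          have h3 : |(y i - z i)/a| ≤ R₀/a := by
            rw [abs_div, abs_of_pos ha]
            gcongr
            exact hyz i
          calc |(y i - z i)/a - ((y i - z i)/a - ↑(round ((y i - z i)/a)))| ≤
              |(y i - z i)/a| + |(y i - z i)/a - ↑(round ((y i - z i)/a))| :=
                abs_sub _ _
            _ ≤ R₀/a + 1/2 := add_le_add h3 h2
        have hcast : ((|knum i| : ℤ) : ℝ) ≤ ((K₀ : ℤ) : ℝ) := by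
          rw [Int.cast_abs]
          have hceil : R₀/a ≤ (⌈R₀/a⌉ : ℝ) := Int.le_ceil _
          rw [hK₀def]
          push_cast
          linarith
        have h2 : |knum i| ≤ K₀ := by exact_mod_cast hcast
        exact abs_le.1 h2
      have hdistk : dist (e.symm (cP knum)) x₀ ≤ R₀ + a * Real.sqrt ((k:ℝ)+1) / 2 := by
        have hd1 : dist (e.symm (cP knum)) x ≤ (a/2) * Real.sqrt ((k:ℝ)+1) := by
          have hc1 : (↑k + 1 : ℝ) = ((k+1 : ℕ) : ℝ) := by push_cast; ring
          rw [hc1]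
          apply dist_le_of_coord _ _ (a/2) (by positivity)
          intro i
          rw [hsymmcoord]
          have : x i = y i := (hecoord x i).symm
          rw [this, abs_sub_comm]
          exact hcoord i
        calc dist (e.symm (cP knum)) x₀ ≤ dist (e.symm (cP knum)) x + dist x x₀ :=
              dist_triangle _ _ _
          _ ≤ (a/2) * Real.sqrt ((k:ℝ)+1) + R₀ := add_le_add hd1 hxball.le
          _ = R₀ + a * Real.sqrt ((k:ℝ)+1) / 2 := by ring
      have hk' : knum ∈ K' := Finset.mem_filter.2 ⟨hK, hdistk⟩
      refine mem_iUnion₂.2 ⟨knum, hk', ?_⟩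
      rw [mem_preimage, hcoredef]
      constructor
      · intro i
        have := hcoord i
        rw [abs_sub_le_iff] at this
        simp only
        linarith [this.2]
      · intro i
        have := hcoord i
        rw [abs_sub_le_iff] at this
        simp only
        linarith [this.1]
    -- put everything together
    have hIball : IntegrableOn u (closedBall x₀ (2*R₀)) :=
      (hu.continuousOn.mono hUsub).integrableOn_compact (isCompact_closedBall _ _)
    have hsubU : ∀ knum ∈ K', e ⁻¹' core knum ⊆ closedBall x₀ (2*R₀) := by
      intro knum hk
      refine subset_trans (preimage_mono ?_) (hboxball knum hk)
      apply Icc_subset_Icc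
      · intro i; simp only; linarith [ha.le]
      · intro i; simp only; linarith [ha.le]
    have hmeas : ∀ knum ∈ K', MeasurableSet (e ⁻¹' core knum) := fun knum _ =>
      measurableSet_Icc.preimage e.continuous.measurable
    have hnn : ∀ knum ∈ K', ∀ x ∈ e ⁻¹' core knum, 0 ≤ u x := fun knum hk x hx =>
      (hupos x (hsubU knum hk hx)).le
    have hint : ∀ knum ∈ K', IntegrableOn u (e ⁻¹' core knum) := fun knum hk =>
      hIball.mono_set (hsubU knum hk)
    have hUnion : (⋃ knum ∈ K', e ⁻¹' core knum) ⊆ closedBall x₀ (2*R₀) :=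
      iUnion₂_subset hsubU
    have hIUnion : IntegrableOn u (⋃ knum ∈ K', e ⁻¹' core knum) := hIball.mono_set hUnion
    have hmeasU : MeasurableSet (⋃ knum ∈ K', e ⁻¹' core knum) :=
      K'.measurableSet_biUnion hmeas
    calc ∫ x in ball x₀ R₀, u x ≤ ∫ x in ⋃ knum ∈ K', e ⁻¹' core knum, u x := by
          apply setIntegral_mono_set hIUnion
          · refine (ae_restrict_iff' hmeasU).2 (ae_of_all _ ?_)
            intro x hx
            rcases mem_iUnion₂.1 hx with ⟨knum, hk, hxk⟩
            exact hnn knum hk x hxk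
          · exact HasSubset.Subset.eventuallyLE hcov
      _ ≤ ∑ knum ∈ K', ∫ x in e ⁻¹' core knum, u x :=
          setIntegral_biUnion_le volume K' _ u hmeas hnn hint
      _ ≤ ∑ _knum ∈ K', C' := Finset.sum_le_sum (fun knum hk => hper knum hk)
      _ = K'.card * C' := by rw [Finset.sum_const, nsmul_eq_mul]
      _ ≤ Kfin.card * C' := by
          apply mul_le_mul_of_nonneg_right _ hC'nn
          exact_mod_cast Finset.card_filter_le _ _
end

section
/- Let f ∈ C¹([0,∞)) ∩ C²((0,∞)) be nonnegative and convex with f(0) = 0, and let u be a positive classical solution of −Δu = f(u) in ℝⁿ₊ with u = 0 on ∂ℝⁿ₊, sufficiently regular (u ∈ W^{3,s}_loc(cl(ℝⁿ₊)) ∩ W^{4,s}_loc(ℝⁿ₊) for all finite s), with v := ∂u/∂x_n > 0 in cl(ℝⁿ₊). Set z := (1 + x_n) v, w := ∂²u/∂x_n², and ξ := w/z. Then ξ satisfies the identity −∇·(z² ∇ξ) = 2 z² ξ² + (1 + x_n) f''(u) v³ in ℝⁿ₊; in particular −∇·(z² ∇ξ) ≥ 2 z² ξ² in ℝⁿ₊,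 and ξ = 0 on ∂ℝⁿ₊. -/
open MeasureTheory Set Metric

/-- The open upper half-space `ℝⁿ₊` in dimension `n+1`. -/
def upperHalf (n : ℕ) : Set (EuclideanSpace ℝ (Fin (n + 1))) :=
  {x | 0 < x (Fin.last n)}

/-- `v = ∂u/∂xₙ`. -/
noncomputable def vfun (n : ℕ) (u : EuclideanSpace ℝ (Fin (n + 1)) → ℝ) :
    EuclideanSpace ℝ (Fin (n + 1)) → ℝ :=
  pd (Fin.last n) u

/-- `w = ∂²u/∂xₙ²`. -/
noncomputable def wfun (n : ℕ) (u : EuclideanSpace ℝ (Fin (n + 1)) → ℝ) :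
    EuclideanSpace ℝ (Fin (n + 1)) → ℝ :=
  pd (Fin.last n) (vfun n u)

/-- `z = (1 + xₙ) v`. -/
noncomputable def zfun (n : ℕ) (u : EuclideanSpace ℝ (Fin (n + 1)) → ℝ)
    (x : EuclideanSpace ℝ (Fin (n + 1))) : ℝ :=
  (1 + x (Fin.last n)) * vfun n u x

/-- `ξ = w / z`. -/
noncomputable def xifun (n : ℕ) (u : EuclideanSpace ℝ (Fin (n + 1)) → ℝ)
    (x : EuclideanSpace ℝ (Fin (n + 1))) : ℝ :=
  wfun n u x / zfun n u x

section Helpers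
variable {m : ℕ} {i j : Fin m} {u g h : EuclideanSpace ℝ (Fin m) → ℝ} {x : EuclideanSpace ℝ (Fin m)}

lemma pd_congr (h' : u =ᶠ[nhds x] g) : pd i u x = pd i g x := by
  rw [pd, h'.fderiv_eq]; rfl

lemma contDiffAt_pd {k : ℕ∞} (h : ContDiffAt ℝ (k+1) u x) : ContDiffAt ℝ k (pd i u) x :=
  (h.fderiv_right le_rfl).clm_apply contDiffAt_const

lemma pd_snd (h : ContDiffAt ℝ 2 u x) :
    pd i (pd j u) x = fderiv ℝ (fderiv ℝ u) x (EuclideanSpace.single i 1) (EuclideanSpace.single j 1) := by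
  have hd : DifferentiableAt ℝ (fderiv ℝ u) x :=
    (h.fderiv_right (m := 1) (by norm_num)).differentiableAt (by norm_num)
  have : pd i (pd j u) x
      = fderiv ℝ (fun y => (fderiv ℝ u y) (EuclideanSpace.single j 1)) x (EuclideanSpace.single i 1) := rfl
  rw [this, fderiv_clm_apply hd (differentiableAt_const _)]
  simp

lemma pd_comm (h : ContDiffAt ℝ 2 u x) : pd i (pd j u) x = pd j (pd i u) x := by
  rw [pd_snd h, pd_snd h]
  exact (h.isSymmSndFDerivAt (by norm_num)).eq _ _

lemma pd_neg' : pd i (fun y => -(g y)) x = -(pd i g x) := by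
  by_cases hg : DifferentiableAt ℝ g x
  · rw [pd, fderiv_fun_neg]; rfl
  · rw [pd, pd, fderiv_zero_of_not_differentiableAt hg,
      fderiv_zero_of_not_differentiableAt (fun hc => hg (by simpa using hc.neg))]
    simp

lemma pd_mul (hg : DifferentiableAt ℝ g x) (hh : DifferentiableAt ℝ h x) :
    pd i (fun y => g y * h y) x = pd i g x * h x + g x * pd i h x := by
  rw [pd, fderiv_fun_mul hg hh]; simp [pd]; ring

lemma pd_add (hg : DifferentiableAt ℝ g x) (hh : DifferentiableAt ℝ h x) :
    pd i (fun y => g y + h y) x = pd i g x + pd i h x := by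
  rw [pd, fderiv_fun_add hg hh]; simp [pd]

lemma pd_sub (hg : DifferentiableAt ℝ g x) (hh : DifferentiableAt ℝ h x) :
    pd i (fun y => g y - h y) x = pd i g x - pd i h x := by
  rw [pd, fderiv_fun_sub hg hh]; simp [pd]

lemma pd_comp (φ φ' : ℝ → ℝ) (hφ : HasDerivAt φ (φ' (g x)) (g x)) (hg : DifferentiableAt ℝ g x) :
    pd i (fun y => φ (g y)) x = φ' (g x) * pd i g x := by
  have := (hφ.comp_hasFDerivAt x hg.hasFDerivAt)
  rw [pd, show (fun y => φ (g y)) = φ ∘ g from rfl, this.fderiv]; simp [pd]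

lemma pd_div (hg : DifferentiableAt ℝ g x) (hh : DifferentiableAt ℝ h x) (h0 : h x ≠ 0) :
    pd i (fun y => g y / h y) x = (pd i g x * h x - g x * pd i h x) / h x ^ 2 := by
  have hinv : pd i (fun y => (h y)⁻¹) x = -(h x ^ 2)⁻¹ * pd i h x :=
    pd_comp _ (fun s => -(s^2)⁻¹) (hasDerivAt_inv h0) hh
  have : (fun y => g y / h y) = fun y => g y * (h y)⁻¹ := by
    funext y; rw [div_eq_mul_inv]
  rw [this, pd_mul (h := fun y => (h y)⁻¹) hg (hh.inv h0), hinv]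
  field_simp
  ring

lemma pd_sum {ι : Type*} (s : Finset ι) (g : ι → EuclideanSpace ℝ (Fin m) → ℝ)
    (hg : ∀ k ∈ s, DifferentiableAt ℝ (g k) x) :
    pd i (fun y => ∑ k ∈ s, g k y) x = ∑ k ∈ s, pd i (g k) x := by
  rw [pd, fderiv_fun_sum hg]; simp [pd]

lemma pd_coord (k : Fin m) : pd i (fun y : EuclideanSpace ℝ (Fin m) => y k) x
    = if i = k then 1 else 0 := by
  have : (fun y : EuclideanSpace ℝ (Fin m) => y k) = (EuclideanSpace.proj k : EuclideanSpace ℝ (Fin m) →L[ℝ] ℝ) := rfl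
  rw [pd, this, ContinuousLinearMap.fderiv]
  simp [EuclideanSpace.single_apply, eq_comm]

lemma contDiffAt_pd' {k k' : WithTop ℕ∞} (hk : k + 1 ≤ k') (h : ContDiffAt ℝ k' u x) :
    ContDiffAt ℝ k (pd i u) x :=
  (h.fderiv_right hk).clm_apply contDiffAt_const

lemma diffAt_pd {k' : WithTop ℕ∞} (hk : 2 ≤ k') (h : ContDiffAt ℝ k' u x) :
    DifferentiableAt ℝ (pd i u) x :=
  (contDiffAt_pd' (k := 1) (by exact_mod_cast hk) h).differentiableAt (by norm_num)

lemma lap_pd_comm {S : Set (EuclideanSpace ℝ (Fin m))} (hS : IsOpen S)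
    (hu : ∀ y ∈ S, ContDiffAt ℝ 3 u y) (hx : x ∈ S) :
    lap (pd j u) x = pd j (lap u) x := by
  have key : ∀ i : Fin m, pd i (fun y => pd i (pd j u) y) x = pd j (pd i (pd i u)) x := by
    intro i
    have e1 : pd i (fun y => pd i (pd j u) y) x = pd i (pd j (pd i u)) x := by
      apply pd_congr
      filter_upwards [hS.mem_nhds hx] with y hy
      exact pd_comm ((hu y hy).of_le (by norm_num))
    rw [e1]
    exact pd_comm (contDiffAt_pd' (by norm_num) (hu x hx))
  have hdiff : ∀ i : Fin m, DifferentiableAt ℝ (pd i (pd i u)) x := fun i =>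
    diffAt_pd (by norm_num) (contDiffAt_pd' (k := 2) (by norm_num) (hu x hx))
  calc lap (pd j u) x = ∑ i, pd j (pd i (pd i u)) x := Finset.sum_congr rfl fun i _ => key i
    _ = pd j (fun y => ∑ i, pd i (pd i u) y) x := (pd_sum _ _ fun i _ => hdiff i).symm
    _ = pd j (lap u) x := rfl

lemma pd_eq_zero_of_vanish {ν : Fin m} (hg : DifferentiableAt ℝ g x) (hx : x ν = 0)
    (hvan : ∀ y : EuclideanSpace ℝ (Fin m), y ν = 0 → g y = 0) (hij : i ≠ ν) :
    pd i g x = 0 := by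
  set e := EuclideanSpace.single i (1:ℝ) with he
  have hline : HasDerivAt (fun s : ℝ => x + s • e) e 0 := by
    simpa using ((hasDerivAt_id (0:ℝ)).smul_const e).const_add x
  have hcomp : HasDerivAt (g ∘ fun s : ℝ => x + s • e) (fderiv ℝ g x e) 0 := by
    refine HasFDerivAt.comp_hasDerivAt 0 ?_ hline
    simpa using hg.hasFDerivAt
  have hzero : (g ∘ fun s : ℝ => x + s • e) = fun _ => 0 := by
    funext s
    refine hvan _ ?_
    have : e ν = 0 := by
      simp only [he, EuclideanSpace.single_apply]
      simp [Ne.symm hij]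
    simp [this, hx]
  rw [hzero] at hcomp
  have := hcomp.unique (hasDerivAt_const 0 0)
  rw [pd, ← he, this]

lemma second_deriv_nonneg {f f' f'' : ℝ → ℝ}
    (hf' : ∀ s ∈ Ici (0 : ℝ), HasDerivWithinAt f (f' s) (Ici 0) s)
    (hf'' : ∀ s ∈ Ioi (0 : ℝ), HasDerivAt f' (f'' s) s)
    (hfconv : ConvexOn ℝ (Ici 0) f) {s : ℝ} (hs : 0 < s) : 0 ≤ f'' s := by
  have hderiv : ∀ y ∈ Ioi (0:ℝ), HasDerivAt f (f' y) y := fun y hy =>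
    (hf' y (mem_Ici.2 (le_of_lt hy))).hasDerivAt (Ici_mem_nhds hy)
  have hmono : MonotoneOn f' (Ioi (0:ℝ)) := by
    have h1 : MonotoneOn (deriv f) (Ioi (0:ℝ)) :=
      (hfconv.subset Ioi_subset_Ici_self (convex_Ioi 0)).monotoneOn_deriv
        (fun y hy => (hderiv y hy).differentiableAt)
    intro a ha b hb hab
    rw [← (hderiv a ha).deriv, ← (hderiv b hb).deriv]
    exact h1 ha hb hab
  have hslope : Filter.Tendsto (slope f' s) (nhdsWithin s (Set.Ioi s)) (nhds (f'' s)) :=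
    ((hasDerivAt_iff_tendsto_slope.1 (hf'' s hs)).mono_left
      (nhdsWithin_mono s fun y hy => ne_of_gt hy))
  refine ge_of_tendsto hslope ?_
  filter_upwards [self_mem_nhdsWithin] with y hy
  have h1 : f' s ≤ f' y := hmono hs (hs.trans hy) (le_of_lt hy)
  have h2 : (0:ℝ) < y - s := sub_pos.2 hy
  rw [slope_def_field]
  exact div_nonneg (sub_nonneg.2 h1) h2.le

lemma pd_const (c : ℝ) : pd i (fun _ => c) x = 0 := by
  rw [pd, fderiv_fun_const]; simp

lemma pd_const_mul (c : ℝ) (hg : DifferentiableAt ℝ g x) :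
    pd i (fun y => c * g y) x = c * pd i g x := by
  rw [pd, fderiv_const_mul hg]; simp [pd]


end Helpers

/-- The auxiliary quotient `ξ = u_{xₙxₙ}/((1+xₙ)u_{xₙ})` of a positive monotone solution of
`-Δu = f(u)` in `ℝⁿ₊` with convex `f`, `f(0) = 0`, satisfies
`-∇·(z²∇ξ) = 2z²ξ² + (1+xₙ)f''(u)v³ ≥ 2z²ξ²` in `ℝⁿ₊` and `ξ = 0` on `∂ℝⁿ₊`. -/
theorem auxiliary_identity_for_xi (n : ℕ) (f f' f'' : ℝ → ℝ)
    (hf' : ∀ s ∈ Ici (0 : ℝ), HasDerivWithinAt f (f' s) (Ici 0) s)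
    (hf'cont : ContinuousOn f' (Ici 0))
    (hf'' : ∀ s ∈ Ioi (0 : ℝ), HasDerivAt f' (f'' s) s)
    (hf''cont : ContinuousOn f'' (Ioi 0))
    (hfnonneg : ∀ s ∈ Ici (0 : ℝ), 0 ≤ f s)
    (hfconv : ConvexOn ℝ (Ici 0) f)
    (hf0 : f 0 = 0)
    (u : EuclideanSpace ℝ (Fin (n + 1)) → ℝ)
    -- sufficient regularity of `u`
    (hreg : ContDiffOn ℝ 4 u (upperHalf n))
    (hregbd : ∃ U : Set (EuclideanSpace ℝ (Fin (n + 1))), IsOpen U ∧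
      {x : EuclideanSpace ℝ (Fin (n + 1)) | 0 ≤ x (Fin.last n)} ⊆ U ∧ ContDiffOn ℝ 2 u U)
    (hpos : ∀ x ∈ upperHalf n, 0 < u x)
    (heq : ∀ x ∈ upperHalf n, -lap u x = f (u x))
    (hbdry : ∀ x : EuclideanSpace ℝ (Fin (n + 1)), x (Fin.last n) = 0 → u x = 0)
    (hv : ∀ x : EuclideanSpace ℝ (Fin (n + 1)), 0 ≤ x (Fin.last n) → 0 < vfun n u x) :
    (∀ x ∈ upperHalf n,
      -(∑ i, pd i (fun y => zfun n u y ^ 2 * pd i (fun y' => xifun n u y') y) x) =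
        2 * zfun n u x ^ 2 * xifun n u x ^ 2 +
          (1 + x (Fin.last n)) * f'' (u x) * vfun n u x ^ 3) ∧
    (∀ x ∈ upperHalf n,
      2 * zfun n u x ^ 2 * xifun n u x ^ 2 ≤
        -(∑ i, pd i (fun y => zfun n u y ^ 2 * pd i (fun y' => xifun n u y') y) x)) ∧
    (∀ x : EuclideanSpace ℝ (Fin (n + 1)), x (Fin.last n) = 0 → xifun n u x = 0) := by
  classical
  set ν := Fin.last n with hν
  set S := upperHalf n with hS
  set V := vfun n u with hV
  set W := wfun n u with hW
  set Z := zfun n u with hZ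
  have hSopen : IsOpen S := by
    have : S = (fun x : EuclideanSpace ℝ (Fin (n+1)) => x ν) ⁻¹' (Ioi 0) := rfl
    rw [this]
    exact isOpen_Ioi.preimage (EuclideanSpace.proj (𝕜 := ℝ) ν).continuous
  -- smoothness
  have hu4 : ∀ x ∈ S, ContDiffAt ℝ 4 u x := fun x hx => hreg.contDiffAt (hSopen.mem_nhds hx)
  have hv3 : ∀ x ∈ S, ContDiffAt ℝ 3 V x := fun x hx =>
    contDiffAt_pd' (by norm_num) (hu4 x hx)
  have hw2 : ∀ x ∈ S, ContDiffAt ℝ 2 W x := fun x hx =>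
    contDiffAt_pd' (by norm_num) (hv3 x hx)
  have hτ : ContDiff ℝ 3 (fun y : EuclideanSpace ℝ (Fin (n+1)) => 1 + y ν) :=
    contDiff_const.add (EuclideanSpace.proj (𝕜 := ℝ) ν).contDiff
  have hz3 : ∀ x ∈ S, ContDiffAt ℝ 3 Z x := fun x hx =>
    hτ.contDiffAt.mul (hv3 x hx)
  -- differentiability
  have hud : ∀ x ∈ S, DifferentiableAt ℝ u x := fun x hx =>
    (hu4 x hx).differentiableAt (by norm_num)
  have hvd : ∀ x ∈ S, DifferentiableAt ℝ V x := fun x hx =>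
    (hv3 x hx).differentiableAt (by norm_num)
  have hwd : ∀ x ∈ S, DifferentiableAt ℝ W x := fun x hx =>
    (hw2 x hx).differentiableAt (by norm_num)
  have hzd : ∀ x ∈ S, DifferentiableAt ℝ Z x := fun x hx =>
    (hz3 x hx).differentiableAt (by norm_num)
  have hpdvd : ∀ i, ∀ x ∈ S, DifferentiableAt ℝ (pd i V) x := fun i x hx =>
    diffAt_pd (by norm_num) (hv3 x hx)
  have hpdwd : ∀ i, ∀ x ∈ S, DifferentiableAt ℝ (pd i W) x := fun i x hx =>
    diffAt_pd (by norm_num) (hw2 x hx)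
  have hpdzd : ∀ i, ∀ x ∈ S, DifferentiableAt ℝ (pd i Z) x := fun i x hx =>
    diffAt_pd (by norm_num) (hz3 x hx)
  -- positivity
  have hvpos : ∀ x ∈ S, 0 < V x := fun x hx => hv x (le_of_lt hx)
  have htpos : ∀ x ∈ S, (0:ℝ) < 1 + x ν := fun x hx => by
    have : (0:ℝ) < x ν := hx
    linarith
  have hzpos : ∀ x ∈ S, 0 < Z x := fun x hx => mul_pos (htpos x hx) (hvpos x hx)
  have hzne : ∀ x ∈ S, Z x ≠ 0 := fun x hx => (hzpos x hx).ne'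
  -- the Laplacian of V
  have hlapv : ∀ x ∈ S, lap V x = -(f' (u x) * V x) := by
    intro x hx
    have h1 : lap V x = pd ν (lap u) x :=
      lap_pd_comm hSopen (fun y hy => (hu4 y hy).of_le (by norm_num)) hx
    have h2 : pd ν (lap u) x = pd ν (fun y => -(f (u y))) x := by
      apply pd_congr
      filter_upwards [hSopen.mem_nhds hx] with y hy
      have := heq y hy
      linarith
    have hfd : HasDerivAt f (f' (u x)) (u x) :=
      (hf' _ (hpos x hx).le).hasDerivAt (Ici_mem_nhds (hpos x hx))
    rw [h1, h2, pd_neg', pd_comp f f' hfd (hud x hx)]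
    rfl
  -- the Laplacian of W
  have hlapw : ∀ x ∈ S, lap W x = -(f'' (u x) * V x ^ 2 + f' (u x) * W x) := by
    intro x hx
    have h1 : lap W x = pd ν (lap V) x :=
      lap_pd_comm hSopen (fun y hy => hv3 y hy) hx
    have h2 : pd ν (lap V) x = pd ν (fun y => -(f' (u y) * V y)) x := by
      apply pd_congr
      filter_upwards [hSopen.mem_nhds hx] with y hy
      exact hlapv y hy
    have hfd : HasDerivAt f' (f'' (u x)) (u x) := hf'' _ (hpos x hx)
    have hfud : DifferentiableAt ℝ (fun y => f' (u y)) x :=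
      hfd.differentiableAt.comp x (hud x hx)
    rw [h1, h2, pd_neg', pd_mul hfud (hvd x hx), pd_comp f' f'' hfd (hud x hx)]
    have hwx : pd ν V x = W x := rfl
    have hvx : pd ν u x = V x := rfl
    rw [hwx, hvx]
    ring
  -- the Laplacian of Z
  have hτd : ∀ y, DifferentiableAt ℝ (fun y' : EuclideanSpace ℝ (Fin (n+1)) => 1 + y' ν) y :=
    fun y => (hτ.differentiable (by norm_num)).differentiableAt
  have hpdτ : ∀ (i : Fin (n+1)) y, pd i (fun y' : EuclideanSpace ℝ (Fin (n+1)) => 1 + y' ν) y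
      = if i = ν then 1 else 0 := by
    intro i y
    have hc : DifferentiableAt ℝ (fun y' : EuclideanSpace ℝ (Fin (n+1)) => y' ν) y :=
      (EuclideanSpace.proj (𝕜 := ℝ) ν).differentiable.differentiableAt
    rw [pd_add (differentiableAt_const _) hc, pd_const, pd_coord]
    ring
  have hpdz : ∀ (i : Fin (n+1)), ∀ y ∈ S,
      pd i Z y = (if i = ν then 1 else 0) * V y + (1 + y ν) * pd i V y := by
    intro i y hy
    have hZfun : Z = fun y' => (1 + y' ν) * V y' := rfl
    rw [hZfun, pd_mul (hτd y) (hvd y hy), hpdτ]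
  have hlapz : ∀ x ∈ S, lap Z x = 2 * W x + (1 + x ν) * lap V x := by
    intro x hx
    have key : ∀ i : Fin (n+1), pd i (fun y => pd i Z y) x
        = 2 * ((if i = ν then 1 else 0) * pd i V x) + (1 + x ν) * pd i (pd i V) x := by
      intro i
      have e1 : pd i (fun y => pd i Z y) x
          = pd i (fun y => (if i = ν then 1 else 0) * V y + (1 + y ν) * pd i V y) x := by
        apply pd_congr
        filter_upwards [hSopen.mem_nhds hx] with y hy
        exact hpdz i y hy
      have hprod : DifferentiableAt ℝ (fun y => (1 + y ν) * pd i V y) x :=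
        (hτd x).mul (hpdvd i x hx)
      have hcv : DifferentiableAt ℝ (fun y => (if i = ν then (1:ℝ) else 0) * V y) x :=
        (differentiableAt_const _).mul (hvd x hx)
      rw [e1, pd_add hcv hprod, pd_const_mul _ (hvd x hx),
        pd_mul (hτd x) (hpdvd i x hx), hpdτ]
      ring
    have : lap Z x = ∑ i, (2 * ((if i = ν then 1 else 0) * pd i V x)
        + (1 + x ν) * pd i (pd i V) x) := Finset.sum_congr rfl fun i _ => key i
    have e2 : (∑ i : Fin (n+1), 2 * ((if i = ν then 1 else 0) * pd i V x)) = 2 * W x := by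
      rw [← Finset.mul_sum]
      congr 1
      rw [Finset.sum_congr rfl (fun i _ => by rw [ite_mul, one_mul, zero_mul]),
        Finset.sum_ite_eq' Finset.univ ν (fun i => pd i V x)]
      simp
      rfl
    rw [this, Finset.sum_add_distrib, e2, ← Finset.mul_sum]
    rfl
  -- the divergence identity
  have hdiv : ∀ x ∈ S,
      (∑ i, pd i (fun y => Z y ^ 2 * pd i (fun y' => xifun n u y') y) x)
        = Z x * lap W x - W x * lap Z x := by
    intro x hx
    have hxieq : (fun y' => xifun n u y') = fun y' => W y' / Z y' := rfl
    have hform : ∀ (i : Fin (n+1)), ∀ y ∈ S,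
        Z y ^ 2 * pd i (fun y' => xifun n u y') y = Z y * pd i W y - W y * pd i Z y := by
      intro i y hy
      rw [hxieq, pd_div (hwd y hy) (hzd y hy) (hzne y hy)]
      field_simp [hzne y hy]
    have key : ∀ i : Fin (n+1), pd i (fun y => Z y ^ 2 * pd i (fun y' => xifun n u y') y) x
        = Z x * pd i (pd i W) x - W x * pd i (pd i Z) x := by
      intro i
      have e1 : pd i (fun y => Z y ^ 2 * pd i (fun y' => xifun n u y') y) x
          = pd i (fun y => Z y * pd i W y - W y * pd i Z y) x := by
        apply pd_congr
        filter_upwards [hSopen.mem_nhds hx] with y hy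
        exact hform i y hy
      rw [e1, pd_sub (g := fun y => Z y * pd i W y) (h := fun y => W y * pd i Z y) ((hzd x hx).mul (hpdwd i x hx)) ((hwd x hx).mul (hpdzd i x hx)),
        pd_mul (hzd x hx) (hpdwd i x hx), pd_mul (hwd x hx) (hpdzd i x hx)]
      ring
    rw [Finset.sum_congr rfl fun i _ => key i, Finset.sum_sub_distrib,
      ← Finset.mul_sum, ← Finset.mul_sum]
    rfl
  -- main identity
  have main : ∀ x ∈ S,
      -(∑ i, pd i (fun y => Z y ^ 2 * pd i (fun y' => xifun n u y') y) x) =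
        2 * Z x ^ 2 * xifun n u x ^ 2 + (1 + x ν) * f'' (u x) * V x ^ 3 := by
    intro x hx
    rw [hdiv x hx, hlapw x hx, hlapz x hx, hlapv x hx]
    have hxix : xifun n u x = W x / Z x := rfl
    have hzx : Z x = (1 + x ν) * V x := rfl
    rw [hxix]
    have hne := hzne x hx
    field_simp
    rw [hzx]
    ring
  refine ⟨main, ?_, ?_⟩
  · intro x hx
    rw [main x hx]
    have h2 : 0 ≤ f'' (u x) := second_deriv_nonneg hf' hf'' hfconv (hpos x hx)
    have h3 : 0 ≤ (1 + x ν) * f'' (u x) * V x ^ 3 := by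
      exact mul_nonneg (mul_nonneg (htpos x hx).le h2) (pow_nonneg (hvpos x hx).le 3)
    linarith
  · -- boundary
    intro x hx0
    obtain ⟨U, hUopen, hUsub, hU2⟩ := hregbd
    have hxU : x ∈ U := hUsub (by simp [hx0])
    have hU2at : ∀ y ∈ U, ContDiffAt ℝ 2 u y := fun y hy =>
      hU2.contDiffAt (hUopen.mem_nhds hy)
    have hpd1 : ∀ i, i ≠ ν → ∀ y, y ν = 0 → pd i u y = 0 := by
      intro i hi y hy
      have hyU : y ∈ U := hUsub (by simp [hy])
      exact pd_eq_zero_of_vanish ((hU2at y hyU).differentiableAt (by norm_num)) hy hbdry hi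
    have hpd2 : ∀ i, i ≠ ν → pd i (pd i u) x = 0 := by
      intro i hi
      exact pd_eq_zero_of_vanish (diffAt_pd le_rfl (hU2at x hxU)) hx0
        (fun y hy => by
          by_cases hyU : y ν = 0
          · exact hpd1 i hi y hy
          · exact hpd1 i hi y hy) hi
    have hlapux : lap u x = W x := by
      rw [lap, Finset.sum_eq_single ν]
      · rfl
      · intro i _ hi
        exact hpd2 i hi
      · intro h
        exact absurd (Finset.mem_univ ν) h
    -- lap u x = 0 by continuity
    have hlap0 : lap u x = 0 := by
      set e := EuclideanSpace.single ν (1:ℝ) with he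
      have he1 : e ν = 1 := by simp [he, EuclideanSpace.single_apply]
      have happ : ∀ t : ℝ, (x + t • e) ν = x ν + t * e ν := fun t => rfl
      have hline : ∀ t : ℝ, 0 < t → x + t • e ∈ S := by
        intro t ht
        show 0 < (x + t • e) ν
        rw [happ, he1, hx0]
        simpa using ht
      have hcont : ContinuousAt (lap u) x := by
        have hterm : ∀ i : Fin (n+1), ContinuousAt (fun y => pd i (fun y' => pd i u y') y) x := by
          intro i
          have h1 : ContDiffAt ℝ 1 (pd i u) x :=
            contDiffAt_pd' (k := 1) (by norm_num) (hU2at x hxU)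
          exact (contDiffAt_pd' (k := 0) (by norm_num) h1).continuousAt
      -- lap u = fun y => ∑ i, pd i (fun y' => pd i u y') y
        exact tendsto_finset_sum _ (fun i _ => hterm i)
      have hmaps : Filter.Tendsto (fun t : ℝ => x + t • e) (nhdsWithin 0 (Ioi 0)) (nhds x) := by
        have hcl : Continuous (fun t : ℝ => x + t • e) :=
          continuous_const.add (continuous_id.smul continuous_const)
        have h0 : x + (0:ℝ) • e = x := by simp
        have := (hcl.tendsto 0).mono_left (nhdsWithin_le_nhds (s := Ioi (0:ℝ)))
        rwa [h0] at this
      have h1 : Filter.Tendsto (fun t : ℝ => lap u (x + t • e)) (nhdsWithin 0 (Ioi 0))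
          (nhds (lap u x)) := hcont.tendsto.comp hmaps
      have hu0 : Filter.Tendsto (fun t : ℝ => u (x + t • e)) (nhdsWithin 0 (Ioi 0))
          (nhdsWithin 0 (Ici 0)) := by
        rw [tendsto_nhdsWithin_iff]
        constructor
        · have h3 : Filter.Tendsto (fun t : ℝ => u (x + t • e)) (nhdsWithin 0 (Ioi 0))
              (nhds (u x)) := ((hU2at x hxU).continuousAt.tendsto).comp hmaps
          rwa [hbdry x hx0] at h3
        · filter_upwards [self_mem_nhdsWithin] with t ht
          exact (hpos _ (hline t ht)).le
      have hfc : Filter.Tendsto f (nhdsWithin 0 (Ici 0)) (nhds (f 0)) :=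
        (hf' 0 (mem_Ici.2 le_rfl)).continuousWithinAt
      have h2 : Filter.Tendsto (fun t : ℝ => lap u (x + t • e)) (nhdsWithin 0 (Ioi 0))
          (nhds 0) := by
        have h4 := (hfc.comp hu0).neg
        rw [hf0, neg_zero] at h4
        apply h4.congr'
        filter_upwards [self_mem_nhdsWithin] with t ht
        have h5 := heq _ (hline t ht)
        simp only [Function.comp]
        linarith
      exact tendsto_nhds_unique h1 h2
    have hW0 : W x = 0 := by rw [← hlapux, hlap0]
    show xifun n u x = 0
    rw [xifun, ← hW, hW0, zero_div]
end

section
/- Let f : [0,∞) → (0,∞) be continuous with ∫₀^∞ f(s) ds = ∞. Then there is no positive function u ∈ C²([0,∞)) satisfying −u'' = f(u) on (0,∞) and u(0) = 0. -/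
open Set MeasureTheory

/-- If `f : [0,∞) → (0,∞)` is continuous with `∫_0^∞ f(s) ds = ∞`, then there is no
positive `u ∈ C²([0,∞))` with `-u'' = f(u)` on `(0,∞)` and `u(0) = 0`. -/
theorem no_solution_ODE_of_nonintegrable (f : ℝ → ℝ)
    (hfcont : ContinuousOn f (Ici 0))
    (hfpos : ∀ s ∈ Ici (0 : ℝ), 0 < f s)
    (hfint : ¬ IntegrableOn f (Ioi 0)) :
    ¬ ∃ u : ℝ → ℝ,
      ContDiffOn ℝ 2 u (Ici 0) ∧
      u 0 = 0 ∧
      (∀ x : ℝ, 0 < x → 0 < u x) ∧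
      (∀ x : ℝ, 0 < x → -(deriv (deriv u) x) = f (u x)) := by
  rintro ⟨u, hu, hu0, hupos, hode⟩
  -- basic differentiability facts
  have hdo : DifferentiableOn ℝ u (Ioi 0) :=
    (hu.mono Ioi_subset_Ici_self).differentiableOn (by norm_num)
  have hder : ∀ x ∈ Ioi (0:ℝ), HasDerivAt u (deriv u x) x := fun x hx =>
    ((hdo.differentiableAt (Ioi_mem_nhds hx)).hasDerivAt)
  have hdu : DifferentiableOn ℝ (deriv u) (Ioi 0) :=
    ((hu.mono Ioi_subset_Ici_self).deriv_of_isOpen (m := 1) isOpen_Ioi (by norm_num)).differentiableOn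
      (by norm_num)
  have hder2 : ∀ x ∈ Ioi (0:ℝ), HasDerivAt (deriv u) (-(f (u x))) x := by
    intro x hx
    have h := (hdu.differentiableAt (Ioi_mem_nhds hx)).hasDerivAt
    have hval : deriv (deriv u) x = -(f (u x)) := by
      have := hode x hx; linarith
    rwa [hval] at h
  -- derivative of u is strictly decreasing on (0, ∞)
  have hcont' : ContinuousOn (deriv u) (Ioi 0) := fun x hx =>
    (hder2 x hx).differentiableAt.continuousAt.continuousWithinAt
  have hanti : StrictAntiOn (deriv u) (Ioi 0) := by
    apply strictAntiOn_of_deriv_neg (convex_Ioi 0) hcont'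
    intro x hx
    rw [interior_Ioi] at hx
    rw [(hder2 x hx).deriv]
    have : 0 < f (u x) := hfpos _ (le_of_lt (hupos x hx))
    linarith
  -- linear bound from derivative bound
  have key : ∀ a M : ℝ, 0 < a → (∀ x ∈ Ici a, deriv u x ≤ M) →
      ∀ x ∈ Ici a, u x ≤ u a + M * (x - a) := by
    intro a M ha hM
    have hg : ∀ x ∈ Ici a, HasDerivAt (fun y => u y - M * y) (deriv u x - M) x := by
      intro x hx
      have h1 : HasDerivAt u (deriv u x) x := hder x (lt_of_lt_of_le ha hx)
      have h2 : HasDerivAt (fun y : ℝ => M * y) M x := by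
        simpa using (hasDerivAt_id x).const_mul M
      exact h1.sub h2
    have hga : AntitoneOn (fun y => u y - M * y) (Ici a) := by
      apply antitoneOn_of_deriv_nonpos (convex_Ici a)
      · exact fun x hx => (hg x hx).continuousAt.continuousWithinAt
      · intro x hx
        rw [interior_Ici] at hx
        exact (hg x (mem_Ici.mpr (le_of_lt hx))).differentiableAt.differentiableWithinAt
      · intro x hx
        rw [interior_Ici] at hx
        rw [(hg x (mem_Ici.mpr (le_of_lt hx))).deriv]
        have := hM x (mem_Ici.mpr (le_of_lt hx))
        linarith
    intro x hx
    have := hga (self_mem_Ici) hx hx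
    simp only at this
    linarith
  -- second-derivative linear bound
  have key2 : ∀ a c : ℝ, 0 < a → (∀ x ∈ Ici a, c ≤ f (u x)) →
      ∀ x ∈ Ici a, deriv u x ≤ deriv u a - c * (x - a) := by
    intro a c ha hc
    have hg : ∀ x ∈ Ici a, HasDerivAt (fun y => deriv u y + c * y) (-(f (u x)) + c) x := by
      intro x hx
      have h1 : HasDerivAt (deriv u) (-(f (u x))) x := hder2 x (lt_of_lt_of_le ha hx)
      have h2 : HasDerivAt (fun y : ℝ => c * y) c x := by
        simpa using (hasDerivAt_id x).const_mul c
      exact h1.add h2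
    have hga : AntitoneOn (fun y => deriv u y + c * y) (Ici a) := by
      apply antitoneOn_of_deriv_nonpos (convex_Ici a)
      · exact fun x hx => (hg x hx).continuousAt.continuousWithinAt
      · intro x hx
        rw [interior_Ici] at hx
        exact (hg x (mem_Ici.mpr (le_of_lt hx))).differentiableAt.differentiableWithinAt
      · intro x hx
        rw [interior_Ici] at hx
        rw [(hg x (mem_Ici.mpr (le_of_lt hx))).deriv]
        have := hc x (mem_Ici.mpr (le_of_lt hx))
        linarith
    intro x hx
    have := hga (self_mem_Ici) hx hx
    simp only at this
    linarith
  -- deriv u is positive on (0, ∞)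
  have hu'pos : ∀ x ∈ Ioi (0:ℝ), 0 < deriv u x := by
    by_contra h
    push_neg at h
    obtain ⟨x0, hx0, hle⟩ := h
    set x1 := x0 + 1 with hx1def
    have hx1 : x1 ∈ Ioi (0:ℝ) := by simp only [mem_Ioi] at hx0 ⊢; linarith
    have hM : deriv u x1 < 0 := lt_of_lt_of_le (hanti hx0 hx1 (by linarith)) hle
    set M := deriv u x1 with hMdef
    have hbound : ∀ x ∈ Ici x1, deriv u x ≤ M := by
      intro x hx
      rcases eq_or_lt_of_le (mem_Ici.mp hx : x1 ≤ x) with h | h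
      · rw [← h]
      · exact le_of_lt (hanti hx1 (lt_trans hx1 h) h)
    have hx1pos : (0:ℝ) < x1 := hx1
    have hux1 : 0 < u x1 := hupos x1 hx1pos
    set x2 := x1 + u x1 / (-M) + 1 with hx2def
    have hdiv : 0 < u x1 / (-M) := div_pos hux1 (by linarith)
    have hx2 : x2 ∈ Ici x1 := by
      simp only [mem_Ici, hx2def]; linarith
    have h1 := key x1 M hx1pos hbound x2 hx2
    have hMne : M ≠ 0 := ne_of_lt hM
    have h2 : M * (u x1 / (-M)) = -(u x1) := by
      rw [div_neg, mul_neg, mul_div_assoc', mul_comm, mul_div_assoc, div_self hMne, mul_one]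
    have hux2 : 0 < u x2 := hupos x2 (by simp only [mem_Ici] at hx2; linarith)
    have : u x2 ≤ u x1 + M * (u x1 / (-M) + 1) := by
      have hx2s : x2 - x1 = u x1 / (-M) + 1 := by rw [hx2def]; ring
      rwa [hx2s] at h1
    rw [mul_add, h2] at this
    linarith
  -- u is monotone on [0, ∞)
  have hmono : StrictMonoOn u (Ici 0) := by
    apply strictMonoOn_of_deriv_pos (convex_Ici 0) (hu.continuousOn)
    intro x hx
    rw [interior_Ici] at hx
    exact hu'pos x hx
  -- u is unbounded
  have hunbdd : ∀ B : ℝ, ∃ x : ℝ, 1 ≤ x ∧ B ≤ u x := by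
    by_contra h
    push_neg at h
    obtain ⟨B, hB⟩ := h
    have hu1 : 0 < u 1 := hupos 1 one_pos
    have hu1B : u 1 < B := hB 1 le_rfl
    have hsub : Icc (u 1) B ⊆ Ici (0:ℝ) := fun t ht => le_trans (le_of_lt hu1) ht.1
    obtain ⟨t0, ht0, hmin⟩ := isCompact_Icc.exists_isMinOn
      (nonempty_Icc.mpr (le_of_lt hu1B)) (hfcont.mono hsub)
    set c := f t0 with hcdef
    have hcpos : 0 < c := hfpos t0 (hsub ht0)
    have hfc : ∀ x ∈ Ici (1:ℝ), c ≤ f (u x) := by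
      intro x hx
      apply hmin
      constructor
      · exact hmono.monotoneOn (mem_Ici.mpr (le_of_lt one_pos)) (mem_Ici.mpr (le_trans (le_of_lt one_pos) hx)) hx
      · exact le_of_lt (hB x hx)
    set x2 := 1 + deriv u 1 / c + 1 with hx2def
    have hd1pos : 0 < deriv u 1 := hu'pos 1 (mem_Ioi.mpr one_pos)
    have hx2 : x2 ∈ Ici (1:ℝ) := by
      have : 0 < deriv u 1 / c := div_pos hd1pos hcpos
      simp only [mem_Ici, hx2def]; linarith
    have h1 := key2 1 c one_pos hfc x2 hx2
    have h2 : c * (deriv u 1 / c) = deriv u 1 := by field_simp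
    have hx2s : x2 - 1 = deriv u 1 / c + 1 := by rw [hx2def]; ring
    rw [hx2s, mul_add, h2] at h1
    have := hu'pos x2 (mem_Ioi.mpr (lt_of_lt_of_le one_pos hx2))
    linarith
  -- the primitive F of f
  set F : ℝ → ℝ := fun t => ∫ s in (0:ℝ)..t, f s with hFdef
  have hFint : ∀ t : ℝ, 0 ≤ t → IntervalIntegrable f volume 0 t := by
    intro t ht
    apply ContinuousOn.intervalIntegrable
    rw [uIcc_of_le ht]
    exact hfcont.mono (fun s hs => hs.1)
  have hFderiv : ∀ t : ℝ, 0 < t → HasDerivAt F (f t) t := by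
    intro t ht
    have hca : ContinuousAt f t := hfcont.continuousAt (Ici_mem_nhds ht)
    exact intervalIntegral.integral_hasDerivAt_right (hFint t (le_of_lt ht))
      (ContinuousOn.stronglyMeasurableAtFilter isOpen_Ioi
        (hfcont.mono Ioi_subset_Ici_self) t ht) hca
  have hFmono : ∀ s t : ℝ, 0 ≤ s → s ≤ t → F s ≤ F t := by
    intro s t hs hst
    have hint1 : IntervalIntegrable f volume 0 s := hFint s hs
    have hint2 : IntervalIntegrable f volume s t := by
      apply ContinuousOn.intervalIntegrable
      rw [uIcc_of_le hst]
      exact hfcont.mono (fun y hy => le_trans hs hy.1)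
    have hadd : F s + ∫ y in s..t, f y = F t :=
      intervalIntegral.integral_add_adjacent_intervals hint1 hint2
    have hnn : 0 ≤ ∫ y in s..t, f y := by
      apply intervalIntegral.integral_nonneg hst
      intro y hy
      exact le_of_lt (hfpos y (le_trans hs hy.1))
    linarith
  -- energy is constant
  set E : ℝ → ℝ := fun x => (deriv u x)^2 + 2 * F (u x) with hEdef
  have hE : ∀ x ∈ Ioi (0:ℝ), HasDerivAt E 0 x := by
    intro x hx
    have h1 : HasDerivAt (fun y => (deriv u y)^2)
        (2 * deriv u x * (-(f (u x)))) x := by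
      have := (hder2 x hx).pow 2
      norm_num at this
      convert this using 1
      · rfl
      · rfl
      · rfl
      · ring
    have h2 : HasDerivAt (fun y => F (u y)) (f (u x) * deriv u x) x :=
      (hFderiv (u x) (hupos x hx)).comp x (hder x hx)
    have h3 := h1.add (h2.const_mul 2)
    have h4 : 2 * deriv u x * (-(f (u x))) + 2 * (f (u x) * deriv u x) = 0 := by ring
    rw [h4] at h3
    exact h3
  have hEconst : ∀ x ∈ Ici (1:ℝ), E x = E 1 := by
    have hcont : ContinuousOn E (Ici 1) := fun x hx =>
      (hE x (mem_Ioi.mpr (lt_of_lt_of_le one_pos hx))).continuousAt.continuousWithinAt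
    have hdiff : DifferentiableOn ℝ E (interior (Ici 1)) := by
      rw [interior_Ici]
      exact fun x hx =>
        (hE x (mem_Ioi.mpr (lt_trans one_pos hx))).differentiableAt.differentiableWithinAt
    have hmonE : MonotoneOn E (Ici 1) := by
      apply monotoneOn_of_deriv_nonneg (convex_Ici 1) hcont hdiff
      intro x hx
      rw [interior_Ici] at hx
      rw [(hE x (mem_Ioi.mpr (lt_trans one_pos hx))).deriv]
    have hantE : AntitoneOn E (Ici 1) := by
      apply antitoneOn_of_deriv_nonpos (convex_Ici 1) hcont hdiff
      intro x hx
      rw [interior_Ici] at hx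
      rw [(hE x (mem_Ioi.mpr (lt_trans one_pos hx))).deriv]
    intro x hx
    exact le_antisymm (hantE self_mem_Ici hx hx) (hmonE self_mem_Ici hx hx)
  -- F(u x) is bounded
  have hFbound : ∀ x ∈ Ici (1:ℝ), F (u x) ≤ E 1 / 2 := by
    intro x hx
    have := hEconst x hx
    have hsq : 0 ≤ (deriv u x)^2 := sq_nonneg _
    simp only [hEdef] at this
    linarith
  -- derive integrability of f on (0, ∞), contradiction
  apply hfint
  apply integrableOn_Ioi_of_intervalIntegral_norm_bounded (E 1 / 2) 0
    (b := fun i : ℝ => i) (l := Filter.atTop)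
  · intro i
    rcases le_or_gt i 0 with h | h
    · rw [Ioc_eq_empty (by exact not_lt.mpr h)]
      exact integrableOn_empty
    · exact (intervalIntegrable_iff_integrableOn_Ioc_of_le (le_of_lt h)).mp
        (hFint i (le_of_lt h))
  · exact Filter.tendsto_id
  · filter_upwards [Filter.eventually_ge_atTop (1:ℝ)] with i hi
    have hi0 : (0:ℝ) ≤ i := le_trans zero_le_one hi
    have heq : (∫ x in (0:ℝ)..i, ‖f x‖) = F i := by
      apply intervalIntegral.integral_congr
      intro x hx
      rw [uIcc_of_le hi0] at hx
      exact (Real.norm_of_nonneg (le_of_lt (hfpos x hx.1)))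
    rw [heq]
    obtain ⟨x, hx1, hxu⟩ := hunbdd i
    calc F i ≤ F (u x) := hFmono i (u x) hi0 hxu
    _ ≤ E 1 / 2 := hFbound x hx1
end

section
/- Let f : [0,∞) → (0,∞) be continuous, nonincreasing, and satisfy ∫₀^∞ f(s) ds = ∞. Then the inequality −Δv ≥ f(v) in ℝⁿ₊ admits no nonnegative solution v ∈ C²(ℝⁿ₊). -/
open MeasureTheory Set Metric

open Filter

/-- relu squared is differentiable with derivative `2 * max x 0`. -/
lemma hasDerivAt_relu_sq (x : ℝ) :
    HasDerivAt (fun t => (max t 0) ^ 2) (2 * max x 0) x := by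
  rcases lt_trichotomy x 0 with h | h | h
  · have he : (fun t => (max t 0) ^ 2) =ᶠ[nhds x] (fun _ => (0:ℝ)) := by
      filter_upwards [eventually_lt_nhds h] with t ht
      simp [max_eq_right ht.le]
    rw [max_eq_right h.le]
    simpa using (hasDerivAt_const x (0:ℝ)).congr_of_eventuallyEq he
  · subst h
    rw [hasDerivAt_iff_tendsto_slope]
    simp only [max_self, mul_zero]
    have he : (fun t : ℝ => max t 0) =ᶠ[nhdsWithin (0:ℝ) {(0:ℝ)}ᶜ] slope (fun t => (max t 0)^2) 0 := by
      filter_upwards [self_mem_nhdsWithin] with t ht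
      have ht' : t ≠ 0 := ht
      rcases le_or_gt t 0 with h | h
      · simp [slope, max_eq_right h, vsub_eq_sub]
      · simp only [slope_def_field, max_eq_left h.le, max_self]
        field_simp
        ring
    have : Tendsto (fun t : ℝ => max t 0) (nhdsWithin 0 {(0:ℝ)}ᶜ) (nhds 0) := by
      have hc : Continuous (fun t : ℝ => max t 0) := continuous_id.max continuous_const
      simpa using (hc.tendsto (0:ℝ)).mono_left nhdsWithin_le_nhds
    exact this.congr' he
  · have he : (fun t => (max t 0) ^ 2) =ᶠ[nhds x] (fun t => t ^ 2) := by
      filter_upwards [eventually_gt_nhds h] with t ht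
      simp [max_eq_left ht.le]
    rw [max_eq_left h.le]
    have h2 := hasDerivAt_pow 2 x
    norm_num at h2
    exact (h2.congr_deriv (by ring)).congr_of_eventuallyEq he

/-- Second-derivative test (one-sided) at a local maximum. -/
lemma right_deriv2_nonpos_at_localMax {g g' : ℝ → ℝ} {a : ℝ}
    (hg : ∀ᶠ σ in nhds (0:ℝ), HasDerivAt g (g' σ) σ)
    (hg' : HasDerivWithinAt g' a (Ici 0) 0)
    (hmax : IsLocalMax g 0) : a ≤ 0 := by
  by_contra hcon
  push_neg at hcon
  have h0 : g' 0 = 0 := hmax.hasDerivAt_eq_zero hg.self_of_nhds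
  have hslope : ∀ᶠ σ in nhdsWithin (0:ℝ) (Ioi 0), 0 < g' σ := by
    have h1 := hg'.Ioi_of_Ici
    rw [hasDerivWithinAt_iff_tendsto_slope] at h1
    have h2 : (Ioi (0:ℝ)) \ {0} = Ioi 0 := by
      ext t; simp only [mem_diff, mem_singleton_iff, mem_Ioi, and_iff_left_iff_imp]
      intro h; exact ne_of_gt h
    rw [h2] at h1
    filter_upwards [h1.eventually_const_lt hcon, self_mem_nhdsWithin] with σ hσ hσ'
    have hσ0 : (0:ℝ) < σ := hσ'
    have : slope g' 0 σ = σ⁻¹ * g' σ := by simp [slope, h0, vsub_eq_sub]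
    rw [this] at hσ
    nlinarith [mul_pos hσ hσ0, inv_pos.mpr hσ0]
  rw [eventually_nhdsWithin_iff] at hslope
  obtain ⟨δ1, hδ1, hs⟩ := Metric.eventually_nhds_iff.1 hslope
  obtain ⟨δ2, hδ2, hd⟩ := Metric.eventually_nhds_iff.1 hg
  obtain ⟨δ3, hδ3, hm⟩ := Metric.eventually_nhds_iff.1 hmax
  set δ := min (min δ1 δ2) δ3 / 2 with hδdef
  have hδ : 0 < δ := by positivity
  have hmem : ∀ σ ∈ Icc (0:ℝ) δ, dist σ (0:ℝ) < min (min δ1 δ2) δ3 := by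
    intro σ hσ
    rw [Real.dist_eq, sub_zero, abs_of_nonneg hσ.1]
    calc σ ≤ δ := hσ.2
      _ < min (min δ1 δ2) δ3 := by rw [hδdef]; linarith [lt_min (lt_min hδ1 hδ2) hδ3]
  have hmono : StrictMonoOn g (Icc (0:ℝ) δ) := by
    apply strictMonoOn_of_deriv_pos (convex_Icc _ _)
    · intro σ hσ
      have := hmem σ hσ
      exact (hd (lt_of_lt_of_le this (le_trans (min_le_left _ _) (min_le_right _ _)))).differentiableAt.continuousAt.continuousWithinAt
    · intro σ hσ
      rw [interior_Icc] at hσ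
      have h1 : dist σ (0:ℝ) < min (min δ1 δ2) δ3 := hmem σ ⟨hσ.1.le, hσ.2.le⟩
      have hder := hd (lt_of_lt_of_le h1 (le_trans (min_le_left _ _) (min_le_right _ _)))
      rw [hder.deriv]
      exact hs (lt_of_lt_of_le h1 (le_trans (min_le_left _ _) (min_le_left _ _))) hσ.1
  have := hmono (left_mem_Icc.2 hδ.le) (right_mem_Icc.2 hδ.le) hδ
  have hle := hm (hmem δ (right_mem_Icc.2 hδ.le) |>.trans_le (min_le_right _ _))
  exact absurd (lt_of_lt_of_le this hle) (lt_irrefl _)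

section Parab
variable (f : ℝ → ℝ)

/-- The data of a 1-d barrier: `ψ` is `C¹` with global derivative `ψ'`, has right second
derivative `A t` everywhere, is affine to the left of `t₀` with value `h`, slope `s`,
eventually becomes nonpositive, and wherever it is nonnegative it is `≤ M` and satisfies
`ψ'' ≥ -f(ψ)/2`. -/
def IsBarrier (ψ ψ' A : ℝ → ℝ) (t₀ h s M : ℝ) : Prop :=
  (∀ t, HasDerivAt ψ (ψ' t) t) ∧
  (∀ t, HasDerivWithinAt ψ' (A t) (Ici t) t) ∧
  (∀ t ≤ t₀, ψ t = h + s * (t - t₀) ∧ ψ' t = s) ∧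
  (∃ T, t₀ < T ∧ ψ T ≤ 0) ∧
  (∀ t, 0 ≤ ψ t → ψ t ≤ M ∧ 0 ≤ 2 * A t + f (ψ t))

-- basic calculus facts for the shifted parabola with relu-squared cap
lemma parab_hasDerivAt (t₀ h s d : ℝ) (t : ℝ) :
    HasDerivAt (fun t => h + s * (t - t₀) - d / 2 * (max (t - t₀) 0) ^ 2)
      (s - d * max (t - t₀) 0) t := by
  have h1 : HasDerivAt (fun t : ℝ => (max (t - t₀) 0) ^ 2) (2 * max (t - t₀) 0) t := by
    have := (hasDerivAt_relu_sq (t - t₀)).comp t ((hasDerivAt_id t).sub_const t₀)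
    simpa using (by exact this : HasDerivAt (fun t : ℝ => (max (t - t₀) 0) ^ 2) (2 * max (t - t₀) 0 * 1) t)
  have h2 : HasDerivAt (fun t : ℝ => h + s * (t - t₀)) s t := by
    simpa using (((hasDerivAt_id t).sub_const t₀).const_mul s).const_add h
  have := h2.sub ((h1.const_mul (d / 2)))
  exact this.congr_deriv (by ring)

lemma parab_rightDeriv2 (t₀ s d : ℝ) (t : ℝ) :
    HasDerivWithinAt (fun t => s - d * max (t - t₀) 0)
      (if t₀ ≤ t then -d else 0) (Ici t) t := by
  by_cases ht : t₀ ≤ t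
  · rw [if_pos ht]
    have hl : HasDerivWithinAt (fun σ : ℝ => s - d * (σ - t₀)) (-d) (Ici t) t := by
      have : HasDerivAt (fun σ : ℝ => s - d * (σ - t₀)) (-d) t := by
        exact ((hasDerivAt_const t s).sub (((hasDerivAt_id t).sub_const t₀).const_mul d)).congr_deriv (by ring)
      exact this.hasDerivWithinAt
    apply hl.congr
    · intro σ hσ
      rw [max_eq_left (by simp at hσ; linarith)]
    · rw [max_eq_left (by linarith)]
  · rw [if_neg ht]
    push_neg at ht
    have hl : HasDerivWithinAt (fun _ : ℝ => s) 0 (Ici t) t := (hasDerivWithinAt_const _ _ s)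
    apply hl.congr_of_eventuallyEq ?_ (by rw [max_eq_right (by linarith)]; ring)
    filter_upwards [eventually_nhdsWithin_of_eventually_nhds (eventually_lt_nhds ht)] with σ hσ
    rw [max_eq_right (by linarith)]; ring

variable (hfpos : ∀ s ∈ Ici (0:ℝ), 0 < f s)
    (hfmono : ∀ s t : ℝ, 0 ≤ s → s ≤ t → f t ≤ f s)
include hfpos hfmono

/-- Single-parabola barrier, for the case where the remaining energy fits in one band. -/
lemma parab_barrier (t₀ h s M : ℝ) (h0 : 0 ≤ h) (hs : 0 ≤ s)
    (hB : s ^ 2 ≤ f (h + 1)) (hM : h + 1 ≤ M) :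
    ∃ ψ ψ' A, IsBarrier f ψ ψ' A t₀ h s M := by
  obtain ⟨d, hd⟩ : ∃ d : ℝ, d = f (h + 1) / 2 := ⟨_, rfl⟩
  have hdpos : 0 < d := by
    have := hfpos (h + 1) (by simp; linarith)
    rw [hd]; positivity
  refine ⟨fun t => h + s * (t - t₀) - d / 2 * (max (t - t₀) 0) ^ 2,
    fun t => s - d * max (t - t₀) 0,
    fun t => if t₀ ≤ t then -d else 0,
    parab_hasDerivAt t₀ h s d, parab_rightDeriv2 t₀ s d, ?_, ?_, ?_⟩
  · intro t ht
    constructor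
    · beta_reduce
      rw [max_eq_right (by linarith : t - t₀ ≤ 0)]; ring
    · beta_reduce
      rw [max_eq_right (by linarith : t - t₀ ≤ 0)]; ring
  · have hu0 : 0 ≤ Real.sqrt (2 * (h + 1) / d) := Real.sqrt_nonneg _
    have hsq : Real.sqrt (2 * (h + 1) / d) ^ 2 = 2 * (h + 1) / d :=
      Real.sq_sqrt (by positivity)
    obtain ⟨u, hu⟩ : ∃ u : ℝ, u = Real.sqrt (2 * (h + 1) / d) + 1 := ⟨_, rfl⟩
    obtain ⟨q, hqdef⟩ : ∃ q : ℝ, q = s / d := ⟨_, rfl⟩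
    have hq0 : 0 ≤ q := by rw [hqdef]; positivity
    have hq : d * q = s := by rw [hqdef]; field_simp
    have hsq2 : d * (Real.sqrt (2 * (h + 1) / d)) ^ 2 = 2 * (h + 1) := by
      rw [hsq]; field_simp
    have hqs : s * q ≤ 2 := by
      have h1 : s * q * d = s ^ 2 := by rw [hqdef]; field_simp
      nlinarith [hB, hdpos]
    refine ⟨t₀ + q + u, by linarith [hq0, hu0, hu.le, hu.ge], ?_⟩
    beta_reduce
    have hr : t₀ + q + u - t₀ = q + u := by ring
    rw [hr, max_eq_left (by linarith [hq0, hu0, hu.le, hu.ge])]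
    have h1 : d * q * u = s * u := by rw [← hq]
    have h2 : d * q * q = s * q := by rw [← hq]
    have h3 : 2 * (h + 1) ≤ d * u ^ 2 := by
      rw [hu]
      nlinarith [hsq2, mul_nonneg hdpos.le hu0, hdpos, hu0]
    nlinarith [h1, h2, h3, hqs]
  · intro t hψ
    beta_reduce at hψ ⊢
    have hbound : h + s * (t - t₀) - d / 2 * (max (t - t₀) 0) ^ 2 ≤ h + 1 := by
      rcases le_or_gt (t - t₀) 0 with hr | hr
      · rw [max_eq_right hr]
        nlinarith [mul_nonpos_of_nonneg_of_nonpos hs hr]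
      · rw [max_eq_left hr.le]
        nlinarith [sq_nonneg (s - d * (t - t₀))]
    refine ⟨le_trans hbound hM, ?_⟩
    by_cases ht : t₀ ≤ t
    · rw [if_pos ht]
      have hf := hfmono _ _ hψ hbound
      rw [hd] at *
      linarith
    · rw [if_neg ht]
      have := hfpos _ hψ
      linarith
end Parab
section Induct
variable (f : ℝ → ℝ)
variable (hfpos : ∀ s ∈ Ici (0:ℝ), 0 < f s)
    (hfmono : ∀ s t : ℝ, 0 ≤ s → s ≤ t → f t ≤ f s)
include hfpos hfmono

lemma barrier_exists (N : ℕ) : ∀ t₀ h s : ℝ, 0 ≤ h → 0 ≤ s →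
    s ^ 2 ≤ ∑ k ∈ Finset.range N, f (h + k + 1) →
    ∃ ψ ψ' A, IsBarrier f ψ ψ' A t₀ h s (h + N + 1) := by
  induction N with
  | zero =>
    intro t₀ h s h0 hs hsum
    simp only [Finset.range_zero, Finset.sum_empty] at hsum
    have hs0 : s = 0 := by nlinarith
    subst hs0
    exact parab_barrier f hfpos hfmono t₀ h 0 (h + (0:ℕ) + 1) h0 le_rfl
      (by simpa using (hfpos (h+1) (by simp; linarith)).le) (by push_cast; linarith)
  | succ N IH =>
    intro t₀ h s h0 hs hsum
    by_cases hcase : s ^ 2 ≤ f (h + 1)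
    · exact parab_barrier f hfpos hfmono t₀ h s _ h0 hs hcase (by push_cast; linarith)
    · push_neg at hcase
      obtain ⟨d, hd⟩ : ∃ d : ℝ, d = f (h + 1) / 2 := ⟨_, rfl⟩
      have hdpos : 0 < d := by
        have := hfpos (h + 1) (by simp; linarith)
        rw [hd]; positivity
      obtain ⟨s₁, hs₁⟩ : ∃ s₁ : ℝ, s₁ = Real.sqrt (s ^ 2 - 2 * d) := ⟨_, rfl⟩
      have hs₁0 : 0 ≤ s₁ := hs₁ ▸ Real.sqrt_nonneg _
      have hs₁sq : s₁ ^ 2 = s ^ 2 - 2 * d := by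
        rw [hs₁, Real.sq_sqrt (by rw [hd]; linarith)]
      have hs₁lt : s₁ < s := by nlinarith
      obtain ⟨τ, hτ⟩ : ∃ τ : ℝ, τ = (s - s₁) / d := ⟨_, rfl⟩
      have hτpos : 0 < τ := by
        rw [hτ]
        apply div_pos (by linarith) hdpos
      have hτd : d * τ = s - s₁ := by rw [hτ]; field_simp
      obtain ⟨t₁, ht₁⟩ : ∃ t₁ : ℝ, t₁ = t₀ + τ := ⟨_, rfl⟩
      have ht₀₁ : t₀ < t₁ := by rw [ht₁]; linarith
      obtain ⟨q, hqdef⟩ : ∃ q : ℝ → ℝ,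
          q = fun t => h + s * (t - t₀) - d / 2 * (max (t - t₀) 0) ^ 2 := ⟨_, rfl⟩
      obtain ⟨q', hq'def⟩ : ∃ q' : ℝ → ℝ, q' = fun t => s - d * max (t - t₀) 0 := ⟨_, rfl⟩
      have hqD : ∀ t, HasDerivAt q (q' t) t := by
        rw [hqdef, hq'def]; exact parab_hasDerivAt t₀ h s d
      have hq'D : ∀ t, HasDerivWithinAt q' (if t₀ ≤ t then -d else 0) (Ici t) t := by
        rw [hq'def]; exact parab_rightDeriv2 t₀ s d
      have hkey : s * τ - d / 2 * τ ^ 2 = 1 := by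
        have h2d : d ≠ 0 := ne_of_gt hdpos
        rw [hτ]; field_simp; nlinarith [hs₁sq]
      have hqval : ∀ t, t₀ ≤ t → q t = h + s * (t - t₀) - d / 2 * (t - t₀) ^ 2 := by
        intro t ht; rw [hqdef]; beta_reduce
        rw [max_eq_left (by linarith)]
      have hqt₁ : q t₁ = h + 1 := by
        rw [hqval t₁ ht₀₁.le, ht₁]
        have : t₀ + τ - t₀ = τ := by ring
        rw [this]; linarith [hkey]
      have hq't₁ : q' t₁ = s₁ := by
        rw [hq'def]; beta_reduce
        rw [ht₁, max_eq_left (by linarith : (0:ℝ) ≤ t₀ + τ - t₀)]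
        have : t₀ + τ - t₀ = τ := by ring
        rw [this]; linarith [hτd]
      have hrec : s₁ ^ 2 ≤ ∑ k ∈ Finset.range N, f ((h+1) + k + 1) := by
        have hsum' : ∑ k ∈ Finset.range (N+1), f (h + k + 1)
            = (∑ k ∈ Finset.range N, f (h + (k+1 : ℕ) + 1)) + f (h + (0:ℕ) + 1) := by
          exact Finset.sum_range_succ' (fun k : ℕ => f (h + k + 1)) N
        have hcongr : ∑ k ∈ Finset.range N, f (h + (k+1 : ℕ) + 1)
            = ∑ k ∈ Finset.range N, f ((h+1) + k + 1) := by
          apply Finset.sum_congr rfl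
          intro k _
          congr 1
          push_cast
          ring
        rw [hsum', hcongr] at hsum
        rw [hd] at hs₁sq
        simp only [Nat.cast_zero, add_zero] at hsum
        linarith
      obtain ⟨ψt, ψt', At, HD, HA, HL, HT, HC⟩ :=
        IH t₁ (h+1) s₁ (by linarith) hs₁0 hrec
      have hψt₁ : ψt t₁ = h + 1 := by
        rw [(HL t₁ le_rfl).1]; ring
      have hψ't₁ : ψt' t₁ = s₁ := (HL t₁ le_rfl).2
      refine ⟨fun t => if t ≤ t₁ then q t else ψt t,
              fun t => if t ≤ t₁ then q' t else ψt' t,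
              fun t => if t < t₁ then (if t₀ ≤ t then -d else 0) else At t,
              ?_, ?_, ?_, ?_, ?_⟩
      · -- C¹
        intro t
        beta_reduce
        rcases lt_trichotomy t t₁ with h1 | h1 | h1
        · have he : (fun t => if t ≤ t₁ then q t else ψt t) =ᶠ[nhds t] q := by
            filter_upwards [eventually_lt_nhds h1] with σ hσ
            rw [if_pos hσ.le]
          rw [if_pos h1.le]
          exact (hqD t).congr_of_eventuallyEq he
        · subst h1
          rw [if_pos le_rfl, hq't₁]
          have hq1 := hqD t
          rw [hq't₁] at hq1
          have hψ1 := HD t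
          rw [hψ't₁] at hψ1
          have hIic : HasDerivWithinAt (fun t' => if t' ≤ t then q t' else ψt t') s₁ (Iic t) t :=
            hq1.hasDerivWithinAt.congr (fun σ hσ => by
              simp only [if_pos (mem_Iic.1 hσ)]) (by simp only [if_pos le_rfl])
          have hIci : HasDerivWithinAt (fun t' => if t' ≤ t then q t' else ψt t') s₁ (Ici t) t :=
            hψ1.hasDerivWithinAt.congr (fun σ hσ => by
              rcases eq_or_lt_of_le (mem_Ici.1 hσ) with h2 | h2
              · rw [if_pos h2.ge]
                rw [← h2, hqt₁, hψt₁]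
              · rw [if_neg (not_le.2 h2)]) (by rw [if_pos le_rfl, hqt₁, hψt₁])
          have := hIic.union hIci
          rwa [Iic_union_Ici, hasDerivWithinAt_univ] at this
        · have he : (fun t => if t ≤ t₁ then q t else ψt t) =ᶠ[nhds t] ψt := by
            filter_upwards [eventually_gt_nhds h1] with σ hσ
            rw [if_neg (not_le.2 hσ)]
          rw [if_neg (not_le.2 h1)]
          exact (HD t).congr_of_eventuallyEq he
      · -- right second derivative
        intro t
        beta_reduce
        rcases lt_or_ge t t₁ with h1 | h1
        · rw [if_pos h1]
          refine (hq'D t).congr_of_eventuallyEq ?_ (by rw [if_pos h1.le])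
          filter_upwards [eventually_nhdsWithin_of_eventually_nhds
            (eventually_lt_nhds h1)] with σ hσ
          rw [if_pos hσ.le]
        · rw [if_neg (not_lt.2 h1)]
          refine (HA t).congr (fun σ hσ => ?_) ?_
          · have hσ1 : t₁ ≤ σ := le_trans h1 (mem_Ici.1 hσ)
            rcases eq_or_lt_of_le hσ1 with h2 | h2
            · rw [if_pos h2.ge, ← h2, hq't₁, hψ't₁]
            · rw [if_neg (not_le.2 h2)]
          · rcases eq_or_lt_of_le h1 with h2 | h2
            · rw [if_pos h2.ge, ← h2, hq't₁, hψ't₁]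
            · rw [if_neg (not_le.2 h2)]
      · -- affine on the left
        intro t ht
        beta_reduce
        have ht' : t ≤ t₁ := le_trans ht ht₀₁.le
        rw [if_pos ht', if_pos ht', hqdef, hq'def]
        beta_reduce
        rw [max_eq_right (by linarith : t - t₀ ≤ 0)]
        constructor <;> ring
      · -- eventually nonpositive
        beta_reduce
        obtain ⟨T, hT1, hT2⟩ := HT
        refine ⟨T, lt_trans ht₀₁ hT1, ?_⟩
        rw [if_neg (not_le.2 hT1)]
        exact hT2
      · -- the differential constraint
        intro t hψt
        beta_reduce at hψt ⊢
        rcases lt_trichotomy t t₁ with h1 | h1 | h1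
        · rw [if_pos h1.le] at hψt ⊢
          rw [if_pos h1]
          by_cases h2 : t₀ ≤ t
          · rw [if_pos h2]
            have hr0 : 0 ≤ t - t₀ := by linarith
            have hrτ : t - t₀ ≤ τ := by rw [ht₁] at h1; linarith
            have hdr : d * (t - t₀) ≤ d * τ := mul_le_mul_of_nonneg_left hrτ hdpos.le
            have hprod : 0 ≤ (τ - (t - t₀)) * (2*s - d*τ - d*(t - t₀)) :=
              mul_nonneg (by linarith) (by linarith)
            have hqle : q t ≤ h + 1 := by
              rw [hqval t h2]
              nlinarith [hkey]
            have hf1 : f (h + 1) ≤ f (q t) := hfmono _ _ hψt hqle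
            refine ⟨by push_cast; linarith, by rw [hd] at *; linarith⟩
          · rw [if_neg h2]
            push_neg at h2
            have hqt : q t = h + s * (t - t₀) := by
              rw [hqdef]; beta_reduce
              rw [max_eq_right (by linarith : t - t₀ ≤ 0)]; ring
            rw [hqt] at hψt ⊢
            have hle : h + s * (t - t₀) ≤ h := by nlinarith
            exact ⟨by push_cast; linarith, by linarith [hfpos _ hψt]⟩
        · subst h1
          rw [if_pos le_rfl, hqt₁] at hψt ⊢
          rw [if_neg (lt_irrefl t)]
          have := HC t (by rw [hψt₁]; linarith)
          rw [hψt₁] at this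
          refine ⟨by push_cast; linarith [this.1], ?_⟩
          rw [← hψt₁] at this ⊢
          rw [hψt₁]
          rw [hψt₁] at this
          exact this.2
        · rw [if_neg (not_le.2 h1)] at hψt ⊢
          rw [if_neg (not_lt.2 h1.le)]
          have := HC t hψt
          exact ⟨by push_cast; push_cast at this; linarith [this.1], this.2⟩
end Induct
section Divergence
open MeasureTheory intervalIntegral

lemma sum_f_unbounded (f : ℝ → ℝ) (hfcont : ContinuousOn f (Ici 0))
    (hfpos : ∀ s ∈ Ici (0:ℝ), 0 < f s)
    (hfmono : ∀ s t : ℝ, 0 ≤ s → s ≤ t → f t ≤ f s)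
    (hfint : ¬ MeasureTheory.IntegrableOn f (Ioi 0))
    (b : ℝ) (hb : 0 ≤ b) (C : ℝ) :
    ∃ N : ℕ, C ≤ ∑ k ∈ Finset.range N, f (b + k + 1) := by
  by_contra hcon
  push_neg at hcon
  apply hfint
  have hII : ∀ u v : ℝ, 0 ≤ u → 0 ≤ v → IntervalIntegrable f volume u v := by
    intro u v hu hv
    exact (hfcont.mono (fun x hx => le_trans (le_inf hu hv) hx.1)).intervalIntegrable
  have hstep : ∀ c : ℝ, 0 ≤ c → ∫ x in c..(c+1), f x ≤ f c := by
    intro c hc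
    have h1 : ∫ x in c..(c+1), f x ≤ ∫ x in c..(c+1), f c := by
      apply integral_mono_on (by linarith) (hII c (c+1) hc (by linarith)) intervalIntegrable_const
      intro x hx
      exact hfmono c x hc hx.1
    simpa using h1
  have hblock : ∀ N : ℕ, ∫ x in (b+1)..(b+1+(N:ℝ)), f x ≤ ∑ k ∈ Finset.range N, f (b+k+1) := by
    intro N
    induction N with
    | zero => simp
    | succ N IH =>
      have hc1 : (0:ℝ) ≤ b + 1 := by linarith
      have hadd := integral_add_adjacent_intervals (f := f) (μ := volume)
        (a := b+1) (b := b+1+(N:ℝ)) (c := b+1+(N:ℝ)+1)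
        (hII _ _ hc1 (by positivity)) (hII _ _ (by positivity) (by positivity))
      have h2 : ∫ x in (b+1+(N:ℝ))..(b+1+(N:ℝ)+1), f x ≤ f (b+(N:ℝ)+1) := by
        have hst := hstep (b+(N:ℝ)+1) (by positivity)
        have he2 : b+1+(N:ℝ) = b+(N:ℝ)+1 := by ring
        rw [he2]
        exact hst
      rw [Finset.sum_range_succ]
      push_cast
      have he3 : b + 1 + ((N:ℝ)+1) = b+1+(N:ℝ)+1 := by ring
      rw [he3]
      linarith
  set I : ℝ := (∫ x in (0:ℝ)..(b+1), f x) + C with hI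
  apply MeasureTheory.integrableOn_Ioi_of_intervalIntegral_norm_bounded I 0
    (fun i : ℕ => ((hfcont.mono (fun x (hx : x ∈ Icc (0:ℝ) ((i:ℝ)+1)) => hx.1)).integrableOn_Icc).mono_set
      Ioc_subset_Icc_self)
    (Filter.tendsto_atTop_add_const_right _ 1 tendsto_natCast_atTop_atTop)
  filter_upwards with i
  have hnorm : ∫ x in (0:ℝ)..((i:ℝ)+1), ‖f x‖ = ∫ x in (0:ℝ)..((i:ℝ)+1), f x := by
    apply integral_congr
    intro x hx
    rw [uIcc_of_le (by positivity)] at hx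
    exact Real.norm_of_nonneg (hfpos x hx.1).le
  rw [hnorm]
  have hmono1 : ∫ x in (0:ℝ)..((i:ℝ)+1), f x ≤ ∫ x in (0:ℝ)..(b+1+((i:ℝ)+1)), f x := by
    have hadd : (∫ x in (0:ℝ)..((i:ℝ)+1), f x) + ∫ x in ((i:ℝ)+1)..(b+1+((i:ℝ)+1)), f x
        = ∫ x in (0:ℝ)..(b+1+((i:ℝ)+1)), f x :=
      integral_add_adjacent_intervals (hII _ _ le_rfl (by positivity))
        (hII _ _ (by positivity) (by positivity))
    have hpos : 0 ≤ ∫ x in ((i:ℝ)+1)..(b+1+((i:ℝ)+1)), f x := by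
      apply integral_nonneg (by linarith)
      intro u hu
      exact (hfpos u (le_trans (by positivity) hu.1)).le
    linarith
  have hadd2 : (∫ x in (0:ℝ)..(b+1), f x) + ∫ x in (b+1)..(b+1+((i:ℝ)+1)), f x
      = ∫ x in (0:ℝ)..(b+1+((i:ℝ)+1)), f x :=
    integral_add_adjacent_intervals (hII _ _ le_rfl (by positivity))
      (hII _ _ (by positivity) (by positivity))
  have hb2 : ∫ x in (b+1)..(b+1+((i:ℝ)+1)), f x ≤ C := by
    have h3 := hblock (i+1)
    have h4 := hcon (i+1)
    push_cast at h3
    linarith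
  rw [hI]
  linarith
end Divergence

set_option maxHeartbeats 1000000 in
/-- If `f : [0,∞) → (0,∞)` is continuous, nonincreasing, with `∫_0^∞ f(s) ds = ∞`, then
`-Δv ≥ f(v)` in `ℝⁿ₊` admits no nonnegative solution `v ∈ C²(ℝⁿ₊)`. -/
theorem no_supersolution_halfspace_of_nonintegrable (n : ℕ) (f : ℝ → ℝ)
    (hfcont : ContinuousOn f (Ici 0))
    (hfpos : ∀ s ∈ Ici (0 : ℝ), 0 < f s)
    (hfmono : ∀ s t : ℝ, 0 ≤ s → s ≤ t → f t ≤ f s)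
    (hfint : ¬ IntegrableOn f (Ioi 0)) :
    ¬ ∃ v : EuclideanSpace ℝ (Fin (n + 1)) → ℝ,
      ContDiffOn ℝ 2 v (upperHalf n) ∧
      (∀ x ∈ upperHalf n, 0 ≤ v x) ∧
      (∀ x ∈ upperHalf n, f (v x) ≤ -lap v x) := by
  rintro ⟨v, hv, hv0, hlap⟩
  let E' := EuclideanSpace ℝ (Fin (n+1))
  have hE' : E' = EuclideanSpace ℝ (Fin (n+1)) := rfl
  -- openness of the half-space
  have hUopen : IsOpen (upperHalf n) :=
    isOpen_Ioi.preimage (EuclideanSpace.proj (𝕜 := ℝ) (Fin.last n)).continuous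
  -- differentiability of v and of its partial derivatives inside
  have hvdiffAt : ∀ {x : E'}, x ∈ upperHalf n → DifferentiableAt ℝ v x := fun {x} hx =>
    ((hv.differentiableOn (by norm_num)).differentiableAt (hUopen.mem_nhds hx))
  have hfdiff : ContDiffOn ℝ 1 (fderiv ℝ v) (upperHalf n) :=
    hv.fderiv_of_isOpen hUopen (by norm_num)
  have hpddiffAt : ∀ (i : Fin (n+1)) {x : E'}, x ∈ upperHalf n →
      DifferentiableAt ℝ (pd i v) x := by
    intro i x hx
    have h1 : DifferentiableAt ℝ (fderiv ℝ v) x :=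
      (hfdiff.differentiableOn (by norm_num)).differentiableAt (hUopen.mem_nhds hx)
    have h2 : pd i v = fun w =>
        (ContinuousLinearMap.apply ℝ ℝ (EuclideanSpace.single i (1:ℝ))) (fderiv ℝ v w) := rfl
    rw [h2]
    exact ((ContinuousLinearMap.apply ℝ ℝ (EuclideanSpace.single i (1:ℝ))).differentiableAt).comp x h1
  -- lines through points
  have hline_deriv : ∀ (i : Fin (n+1)) (x0 : E') (σ : ℝ),
      HasDerivAt (fun σ : ℝ => x0 + σ • EuclideanSpace.single i (1:ℝ))
        (EuclideanSpace.single i (1:ℝ)) σ := by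
    intro i x0 σ
    have := ((hasDerivAt_id σ).smul_const (EuclideanSpace.single i (1:ℝ))).const_add x0
    simp only [id, one_smul] at this
    exact this
  have hvline : ∀ (i : Fin (n+1)) (x0 : E') (σ : ℝ),
      (x0 + σ • EuclideanSpace.single i (1:ℝ)) ∈ upperHalf n →
      HasDerivAt (fun σ : ℝ => v (x0 + σ • EuclideanSpace.single i (1:ℝ)))
        (pd i v (x0 + σ • EuclideanSpace.single i (1:ℝ))) σ := by
    intro i x0 σ hmem
    exact (hvdiffAt hmem).hasFDerivAt.comp_hasDerivAt σ (hline_deriv i x0 σ)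
  have hpdline : ∀ (i : Fin (n+1)) (x0 : E'), x0 ∈ upperHalf n →
      HasDerivAt (fun σ : ℝ => pd i v (x0 + σ • EuclideanSpace.single i (1:ℝ)))
        (pd i (fun w => pd i v w) x0) 0 := by
    intro i x0 hx0
    have h0 : x0 + (0:ℝ) • EuclideanSpace.single i (1:ℝ) = x0 := by simp
    have h1 := (hpddiffAt i hx0).hasFDerivAt
    rw [← h0] at h1
    have h2 := h1.comp_hasDerivAt 0 (hline_deriv i x0 0)
    rw [h0] at h2
    exact h2
  -- coordinates of points on lines
  have happly : ∀ (x0 : E') (i j : Fin (n+1)) (σ : ℝ),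
      (x0 + σ • EuclideanSpace.single i (1:ℝ)) j
        = x0 j + σ * (if j = i then 1 else 0) := by
    intro x0 i j σ
    rw [PiLp.add_apply, PiLp.smul_apply, EuclideanSpace.single_apply, smul_eq_mul]
  -- the squared norm of the horizontal part
  set Efin : Finset (Fin (n+1)) := Finset.univ.erase (Fin.last n) with hEfin
  set S : E' → ℝ := fun x => ∑ j ∈ Efin, (x j)^2 with hSdef
  have hScont : Continuous S := by
    apply continuous_finset_sum
    intro j _
    exact ((EuclideanSpace.proj (𝕜 := ℝ) j).continuous).pow 2
  have hS0 : ∀ x, 0 ≤ S x := fun x => Finset.sum_nonneg (fun j _ => sq_nonneg _)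
  -- the distinguished point z
  set z : E' := EuclideanSpace.single (Fin.last n) (2:ℝ) with hz
  have hzlast : z (Fin.last n) = 2 := by rw [hz, EuclideanSpace.single_apply, if_pos rfl]
  have hzU : z ∈ upperHalf n := by
    show (0:ℝ) < z (Fin.last n)
    rw [hzlast]; norm_num
  have hSz : S z = 0 := by
    show (∑ j ∈ Efin, (z j)^2) = 0
    apply Finset.sum_eq_zero
    intro j hj
    have hjne : j ≠ (Fin.last n) := (Finset.mem_erase.1 hj).1
    rw [hz, EuclideanSpace.single_apply, if_neg hjne]
    norm_num
  -- main claim: v z exceeds every b ≥ 1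
  have hmain : ∀ b : ℝ, 1 ≤ b → b ≤ v z := by
    intro b hb
    -- construct the barrier
    obtain ⟨N, hN⟩ := sum_f_unbounded f hfcont hfpos hfmono hfint b (by linarith) (b^2)
    obtain ⟨ψ, ψ', A, HD, HA, HL, HT, HC⟩ :=
      barrier_exists f hfpos hfmono N 2 b b (by linarith) (by linarith) hN
    obtain ⟨T, hT2, hTneg⟩ := HT
    set Md : ℝ := b + (N:ℝ) + 1 with hMd
    have hMd1 : 1 ≤ Md := by rw [hMd]; push_cast; linarith [Nat.cast_nonneg (α := ℝ) N]
    have hfMd : 0 < f Md := hfpos Md (by simp; linarith)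
    set ε : ℝ := f Md / (8*((n:ℝ)+1)) with hε
    have hεpos : 0 < ε := by rw [hε]; positivity
    set Lsq : ℝ := Md / ε with hLsq
    have hLsqpos : 0 < Lsq := by rw [hLsq]; positivity
    have hεL : ε * Lsq = Md := by
      rw [hLsq]; field_simp
    have hψ2 : ψ 2 = b := by rw [(HL 2 le_rfl).1]; ring
    have hψ1 : ψ 1 = 0 := by rw [(HL 1 (by norm_num)).1]; ring
    have hψcont : Continuous ψ := by
      rw [continuous_iff_continuousAt]
      exact fun t => (HD t).continuousAt
    -- the compact region
    set wf : E' → ℝ := fun x => ψ (x (Fin.last n)) - ε * S x - v x with hwf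
    set D : Set E' := (fun x : E' => x (Fin.last n)) ⁻¹' (Icc 1 T) ∩ S ⁻¹' (Iic Lsq) with hD
    have hDU : D ⊆ upperHalf n := by
      intro x hx
      have h1 : (1:ℝ) ≤ x (Fin.last n) := (hx.1 : x (Fin.last n) ∈ Icc (1:ℝ) T).1
      show (0:ℝ) < x (Fin.last n)
      linarith
    have hDclosed : IsClosed D :=
      (isClosed_Icc.preimage (EuclideanSpace.proj (𝕜 := ℝ) (Fin.last n)).continuous).inter
        (isClosed_Iic.preimage hScont)
    have hDbounded : Bornology.IsBounded D := by
      rw [Metric.isBounded_iff_subset_closedBall 0]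
      refine ⟨Real.sqrt (Lsq + (1 + |T|)^2), fun x hx => ?_⟩
      rw [Metric.mem_closedBall, dist_zero_right]
      rw [EuclideanSpace.norm_eq]
      apply Real.sqrt_le_sqrt
      have hsplit : ∑ j, ‖x j‖^2 = ‖x (Fin.last n)‖^2 + ∑ j ∈ Efin, ‖x j‖^2 := by
        rw [hEfin]
        exact (Finset.add_sum_erase _ _ (Finset.mem_univ (Fin.last n))).symm
      rw [hsplit]
      have h1 : ∑ j ∈ Efin, ‖x j‖^2 ≤ Lsq := by
        have h1' : ∑ j ∈ Efin, ‖x j‖^2 = S x :=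
          Finset.sum_congr rfl (fun j _ => by rw [Real.norm_eq_abs, sq_abs])
        rw [h1']
        exact hx.2
      have hxIcc : x (Fin.last n) ∈ Icc (1:ℝ) T := hx.1
      have h2 : ‖x (Fin.last n)‖^2 ≤ (1 + |T|)^2 := by
        rw [Real.norm_eq_abs]
        apply pow_le_pow_left₀ (abs_nonneg _)
        rw [abs_of_nonneg (by linarith [hxIcc.1] : (0:ℝ) ≤ x (Fin.last n))]
        calc x (Fin.last n) ≤ T := hxIcc.2
          _ ≤ |T| := le_abs_self T
          _ ≤ 1 + |T| := by linarith
      linarith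
    have hDcompact : IsCompact D := Metric.isCompact_of_isClosed_isBounded hDclosed hDbounded
    have hzD : z ∈ D := by
      constructor
      · show z (Fin.last n) ∈ Icc (1:ℝ) T
        rw [hzlast]
        exact ⟨by norm_num, by linarith⟩
      · show S z ∈ Iic Lsq
        rw [hSz]
        exact le_of_lt hLsqpos
    have hwcont : ContinuousOn wf D := by
      apply ContinuousOn.sub
      apply ContinuousOn.sub
      · exact (hψcont.comp (EuclideanSpace.proj (𝕜 := ℝ) (Fin.last n)).continuous).continuousOn
      · exact (hScont.const_smul ε).continuousOn
      · exact hv.continuousOn.mono hDU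
    obtain ⟨y, hyD, hymax⟩ := hDcompact.exists_isMaxOn ⟨z, hzD⟩ hwcont
    have hymax' : ∀ x ∈ D, wf x ≤ wf y := fun x hx => hymax hx
    -- conclude if the max is nonpositive
    rcases le_or_gt (wf y) 0 with hcase | hcase
    · have hzle : ψ (z (Fin.last n)) - ε * S z - v z ≤ 0 := le_trans (hymax' z hzD) hcase
      rw [hzlast, hSz, hψ2] at hzle
      linarith
    -- otherwise: contradiction via the second derivative test
    · exfalso
      have hyU : y ∈ upperHalf n := hDU hyD
      have hyIcc : y (Fin.last n) ∈ Icc (1:ℝ) T := hyD.1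
      have hySIic : S y ≤ Lsq := hyD.2
      have hvy : 0 ≤ v y := hv0 y hyU
      have hwy : wf y = ψ (y (Fin.last n)) - ε * S y - v y := rfl
      have hεS : 0 ≤ ε * S y := mul_nonneg hεpos.le (hS0 y)
      have hψy_pos : 0 < ψ (y (Fin.last n)) := by nlinarith [hcase, hwy]
      have hvyle : v y ≤ ψ (y (Fin.last n)) := by nlinarith [hcase, hwy]
      have hcons := HC (y (Fin.last n)) hψy_pos.le
      -- y is interior: not on any face of D
      have hy1 : 1 < y (Fin.last n) := by
        rcases lt_or_eq_of_le hyIcc.1 with h | h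
        · exact h
        · exfalso
          have h2 := hwy
          rw [← h, hψ1] at h2
          nlinarith
      have hyT : y (Fin.last n) < T := by
        rcases lt_or_eq_of_le hyIcc.2 with h | h
        · exact h
        · exfalso
          have h2 := hwy
          rw [h] at h2
          nlinarith [hTneg]
      have hySL : S y < Lsq := by
        rcases lt_or_eq_of_le hySIic with h | h
        · exact h
        · exfalso
          have h2 := hwy
          rw [h] at h2
          have h3 : ε * Lsq = Md := hεL
          nlinarith [hcons.1]
      -- a neighborhood of y is inside D
      have hUopen' : IsOpen ((fun x : E' => x (Fin.last n)) ⁻¹' (Ioo 1 T) ∩ S ⁻¹' (Iio Lsq)) :=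
        (isOpen_Ioo.preimage (EuclideanSpace.proj (𝕜 := ℝ) (Fin.last n)).continuous).inter
          (isOpen_Iio.preimage hScont)
      have hyin : y ∈ (fun x : E' => x (Fin.last n)) ⁻¹' (Ioo 1 T) ∩ S ⁻¹' (Iio Lsq) :=
        ⟨⟨hy1, hyT⟩, hySL⟩
      have hsubD : ((fun x : E' => x (Fin.last n)) ⁻¹' (Ioo 1 T) ∩ S ⁻¹' (Iio Lsq)) ⊆ D := by
        intro x hx
        have h1 : x (Fin.last n) ∈ Ioo (1:ℝ) T := hx.1
        have h2 : S x < Lsq := hx.2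
        exact ⟨⟨h1.1.le, h1.2.le⟩, le_of_lt h2⟩
      -- local max of w along each coordinate line
      have hlocmax : ∀ i : Fin (n+1),
          IsLocalMax (fun σ : ℝ => wf (y + σ • EuclideanSpace.single i (1:ℝ))) 0 := by
        intro i
        have hcont : Continuous (fun σ : ℝ => y + σ • EuclideanSpace.single i (1:ℝ)) := by
          exact continuous_const.add (continuous_id.smul continuous_const)
        have hev : ∀ᶠ σ : ℝ in nhds 0,
            (y + σ • EuclideanSpace.single i (1:ℝ)) ∈
              ((fun x : E' => x (Fin.last n)) ⁻¹' (Ioo 1 T) ∩ S ⁻¹' (Iio Lsq)) := by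
          have h0 : y + (0:ℝ) • EuclideanSpace.single i (1:ℝ) = y := by simp
          have := hcont.continuousAt (x := (0:ℝ)) (hUopen'.mem_nhds (by rw [h0]; exact hyin))
          exact this
        filter_upwards [hev] with σ hσ
        have h0 : y + (0:ℝ) • EuclideanSpace.single i (1:ℝ) = y := by simp
        calc wf (y + σ • EuclideanSpace.single i (1:ℝ)) ≤ wf y := hymax' _ (hsubD hσ)
          _ = wf (y + (0:ℝ) • EuclideanSpace.single i (1:ℝ)) := by rw [h0]
      -- second derivative test in horizontal directions
      have hhoriz : ∀ i : Fin (n+1), i ≠ (Fin.last n) →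
          -2*ε - pd i (fun w => pd i v w) y ≤ 0 := by
        intro i hi
        have hiE : i ∈ Efin := Finset.mem_erase.2 ⟨hi, Finset.mem_univ i⟩
        have hlastline : ∀ σ : ℝ, (y + σ • EuclideanSpace.single i (1:ℝ)) (Fin.last n) = y (Fin.last n) := by
          intro σ
          rw [happly, if_neg (Ne.symm hi)]
          ring
        have hmemline : ∀ σ : ℝ, (y + σ • EuclideanSpace.single i (1:ℝ)) ∈ upperHalf n := by
          intro σ
          show (0:ℝ) < _
          rw [hlastline σ]
          linarith
        have hSline : ∀ σ : ℝ, S (y + σ • EuclideanSpace.single i (1:ℝ))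
            = S y + (2*σ*(y i) + σ^2) := by
          intro σ
          show (∑ j ∈ Efin, ((y + σ • EuclideanSpace.single i (1:ℝ)) j)^2)
            = (∑ j ∈ Efin, (y j)^2) + (2*σ*(y i) + σ^2)
          have hterm : ∀ j ∈ Efin, ((y + σ • EuclideanSpace.single i (1:ℝ)) j)^2
              = (y j)^2 + (if j = i then 2*σ*(y i) + σ^2 else 0) := by
            intro j hj
            rw [happly]
            by_cases hji : j = i
            · rw [if_pos hji, if_pos hji, hji]; ring
            · rw [if_neg hji, if_neg hji]; ring
          rw [Finset.sum_congr rfl hterm, Finset.sum_add_distrib,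
            Finset.sum_ite_eq' Efin i, if_pos hiE]
        -- explicit form of w along the line
        have hgeq : (fun σ : ℝ => wf (y + σ • EuclideanSpace.single i (1:ℝ)))
            = fun σ : ℝ => ψ (y (Fin.last n)) - ε * (S y + (2*σ*(y i) + σ^2))
                - v (y + σ • EuclideanSpace.single i (1:ℝ)) := by
          funext σ
          show ψ _ - ε * S _ - v _ = _
          rw [hlastline σ, hSline σ]
        have hmax := hlocmax i
        rw [hgeq] at hmax
        refine right_deriv2_nonpos_at_localMax (g' := fun σ : ℝ =>
            -ε * (2*(y i) + 2*σ) - pd i v (y + σ • EuclideanSpace.single i (1:ℝ)))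
          ?_ ?_ hmax
        · filter_upwards with σ
          have h1 : HasDerivAt (fun σ : ℝ => ψ (y (Fin.last n)) - ε * (S y + (2*σ*(y i) + σ^2)))
              (-ε * (2*(y i) + 2*σ)) σ := by
            have h2 : HasDerivAt (fun σ : ℝ => S y + (2*σ*(y i) + σ^2))
                (2*(y i) + 2*σ) σ := by
              have h3 : HasDerivAt (fun σ : ℝ => 2*σ*(y i) + σ^2) (2*(y i) + 2*σ) σ := by
                have h4 := ((hasDerivAt_id σ).const_mul 2).mul_const (y i)
                have h5 := hasDerivAt_pow 2 σ
                norm_num at h4 h5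
                exact (h4.add h5).congr_deriv (by ring)
              exact h3.const_add (S y)
            have := (h2.const_mul ε).const_sub (ψ (y (Fin.last n)))
            exact this.congr_deriv (by ring)
          exact h1.sub (hvline i y σ (hmemline σ))
        · have h1 : HasDerivAt (fun σ : ℝ => -ε * (2*(y i) + 2*σ)) (-2*ε) 0 := by
            have := ((hasDerivAt_id (0:ℝ)).const_mul 2).const_add (2*(y i))
            have h2 := this.const_mul (-ε)
            norm_num at h2 ⊢
            exact h2.congr_deriv (by ring)
          exact ((h1.sub (hpdline i y hyU)).hasDerivWithinAt)
      -- second derivative test in the vertical direction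
      have hvert : A (y (Fin.last n)) - pd (Fin.last n) (fun w => pd (Fin.last n) v w) y ≤ 0 := by
        have hlastline : ∀ σ : ℝ, (y + σ • EuclideanSpace.single (Fin.last n) (1:ℝ)) (Fin.last n)
            = y (Fin.last n) + σ := by
          intro σ
          rw [happly, if_pos rfl]
          ring
        have hSline : ∀ σ : ℝ, S (y + σ • EuclideanSpace.single (Fin.last n) (1:ℝ)) = S y := by
          intro σ
          show (∑ j ∈ Efin, ((y + σ • EuclideanSpace.single (Fin.last n) (1:ℝ)) j)^2)
            = ∑ j ∈ Efin, (y j)^2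
          apply Finset.sum_congr rfl
          intro j hj
          rw [happly, if_neg (Finset.mem_erase.1 hj).1]
          ring_nf
        have hmemline : ∀ σ : ℝ, σ > -1 → (y + σ • EuclideanSpace.single (Fin.last n) (1:ℝ)) ∈ upperHalf n := by
          intro σ hσ
          show (0:ℝ) < _
          rw [hlastline σ]
          linarith
        have hgeq : (fun σ : ℝ => wf (y + σ • EuclideanSpace.single (Fin.last n) (1:ℝ)))
            = fun σ : ℝ => ψ (y (Fin.last n) + σ) - ε * S y
                - v (y + σ • EuclideanSpace.single (Fin.last n) (1:ℝ)) := by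
          funext σ
          show ψ _ - ε * S _ - v _ = _
          rw [hlastline σ, hSline σ]
        have hmax := hlocmax (Fin.last n)
        rw [hgeq] at hmax
        refine right_deriv2_nonpos_at_localMax (g' := fun σ : ℝ =>
            ψ' (y (Fin.last n) + σ) - pd (Fin.last n) v (y + σ • EuclideanSpace.single (Fin.last n) (1:ℝ)))
          ?_ ?_ hmax
        · filter_upwards [eventually_gt_nhds (by norm_num : (-1:ℝ) < 0)] with σ hσ
          have h1 : HasDerivAt (fun σ : ℝ => ψ (y (Fin.last n) + σ)) (ψ' (y (Fin.last n) + σ)) σ := by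
            have := (HD (y (Fin.last n) + σ)).comp σ ((hasDerivAt_id σ).const_add (y (Fin.last n)))
            exact this.congr_deriv (by ring)
          exact (h1.sub_const (ε * S y)).sub (hvline (Fin.last n) y σ (hmemline σ hσ))
        · have hsh : HasDerivWithinAt (fun σ : ℝ => y (Fin.last n) + σ) (1:ℝ) (Ici 0) 0 :=
            ((hasDerivAt_id (0:ℝ)).const_add (y (Fin.last n))).hasDerivWithinAt
          have hmap : MapsTo (fun σ : ℝ => y (Fin.last n) + σ) (Ici 0) (Ici (y (Fin.last n))) := by
            intro σ hσ
            simp only [mem_Ici] at hσ ⊢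
            linarith
          have hh₂ : HasDerivWithinAt ψ' (A (y (Fin.last n))) (Ici (y (Fin.last n))) ((fun σ : ℝ => y (Fin.last n) + σ) 0) := by
            simpa using HA (y (Fin.last n))
          have h2 := HasDerivWithinAt.comp (0:ℝ) hh₂ hsh hmap
          simp only [mul_one] at h2
          have h2' : HasDerivWithinAt (fun σ : ℝ => ψ' (y (Fin.last n) + σ)) (A (y (Fin.last n))) (Ici 0) 0 := h2
          exact h2'.sub ((hpdline (Fin.last n) y hyU).hasDerivWithinAt)
      -- combine all the inequalities
      have hlapy := hlap y hyU
      have hlapdef : lap v y = ∑ i, pd i (fun w => pd i v w) y := rfl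
      have hsum : lap v y = pd (Fin.last n) (fun w => pd (Fin.last n) v w) y
          + ∑ i ∈ Efin, pd i (fun w => pd i v w) y := by
        rw [hlapdef, hEfin]
        exact (Finset.add_sum_erase _ _ (Finset.mem_univ (Fin.last n))).symm
      have hsumE : ∑ _i ∈ Efin, (-2*ε) ≤ ∑ i ∈ Efin, pd i (fun w => pd i v w) y :=
        Finset.sum_le_sum (fun i hi => by linarith [hhoriz i (Finset.mem_erase.1 hi).1])
      have hcardE : (Efin.card : ℝ) = n := by
        rw [hEfin, Finset.card_erase_of_mem (Finset.mem_univ _), Finset.card_univ,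
          Fintype.card_fin]
        push_cast
        ring
      have hconst : ∑ _i ∈ Efin, (-2*ε) = (n:ℝ) * (-2*ε) := by
        rw [Finset.sum_const, nsmul_eq_mul, hcardE]
      have hA2 : A (y (Fin.last n)) ≤ lap v y + 2*(n:ℝ)*ε := by
        have := hvert
        rw [hsum]
        rw [hconst] at hsumE
        linarith
      have hmono1 : f (ψ (y (Fin.last n))) ≤ f (v y) := hfmono (v y) (ψ (y (Fin.last n))) hvy hvyle
      have hfM2 : f Md ≤ f (ψ (y (Fin.last n))) := hfmono (ψ (y (Fin.last n))) Md hψy_pos.le hcons.1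
      have hεc : 8*((n:ℝ)+1) * ε = f Md := by
        rw [hε]
        field_simp
      have hεn : 2*(n:ℝ)*ε ≤ f Md / 4 := by
        have h2 : f Md / 4 = 2*(n:ℝ)*ε + 2*ε := by rw [← hεc]; ring
        linarith
      linarith [hcons.2]
  have h1 := hmain (v z + 1) (by linarith [hv0 z hzU])
  linarith
end
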